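/- arXiv:0902.1873 — 4 statements merged into one kernel-verified Lean document; each statement's English description precedes it below -/
import Mathlib

section
/- Denote by (c(a,b),d(a,b)) the unique pair in [0,1]² satisfying G_1(a,c)−2(φ_1(c)−φ_1(a))/δx = G_2(d,b)−2(φ_2(b)−φ_2(d))/δx and π̃_1(c)∩π̃_2(d)≠∅. Then the maps (a,b)↦c(a,b) and (a,b)↦d(a,b) from [0,1]² to [0,1] are continuous, and each is nondecreasing with respect to each of its two arguments. -/
open Set

/-- The monotone graph `π̃` associated to an increasing capillary pressure function `π`. -/
def tildePi (π : ℝ → ℝ) (s : ℝ) : Set ℝ :=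
  if s = 0 then Set.Iic (π 0) else if s = 1 then Set.Ici (π 1) else {π s}

/-- The connection condition `π̃₁(c) ∩ π̃₂(d) ≠ ∅`. -/
def Connects (π₁ π₂ : ℝ → ℝ) (c d : ℝ) : Prop :=
  (tildePi π₁ c ∩ tildePi π₂ d).Nonempty

open Filter Topology

lemma tildePi_le {π : ℝ → ℝ} {s p : ℝ} (hs : s < 1) (hp : p ∈ tildePi π s) :
    p ≤ π s := by
  unfold tildePi at hp
  split_ifs at hp with h1 h2
  · subst h1; exact hp
  · exact absurd h2 hs.ne
  · exact hp.le

lemma tildePi_ge {π : ℝ → ℝ} {s p : ℝ} (hs : 0 < s) (hp : p ∈ tildePi π s) :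
    π s ≤ p := by
  unfold tildePi at hp
  split_ifs at hp with h1 h2
  · exact absurd h1 hs.ne'
  · subst h2; exact hp
  · exact hp.ge

lemma tildePi_lt {π : ℝ → ℝ} (hmono : StrictMonoOn π (Icc 0 1))
    {s t p q : ℝ} (hs : s ∈ Icc (0:ℝ) 1) (ht : t ∈ Icc (0:ℝ) 1) (hst : s < t)
    (hp : p ∈ tildePi π s) (hq : q ∈ tildePi π t) : p < q :=
  calc p ≤ π s := tildePi_le (lt_of_lt_of_le hst ht.2) hp
    _ < π t := hmono hs ht hst
    _ ≤ q := tildePi_ge (lt_of_le_of_lt hs.1 hst) hq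

lemma tildePi_clamp {π : ℝ → ℝ} (hmono : StrictMonoOn π (Icc 0 1))
    {s p m M : ℝ} (hs : s ∈ Icc (0:ℝ) 1) (hm : m ≤ π 0) (hM : π 1 ≤ M)
    (hp : p ∈ tildePi π s) : max m (min p M) ∈ tildePi π s := by
  have h01 : π 0 ≤ π 1 := (hmono.monotoneOn) (by norm_num) (by norm_num) (by norm_num)
  unfold tildePi at hp ⊢
  split_ifs at hp ⊢ with h1 h2
  · exact max_le hm ((min_le_left _ _).trans hp)
  · exact le_max_of_le_right (le_min hp hM)
  · have hle : π s ≤ π 1 := hmono.monotoneOn hs (by norm_num) hs.2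
    have hge : π 0 ≤ π s := hmono.monotoneOn (by norm_num) hs hs.1
    obtain rfl : p = π s := hp
    rw [min_eq_left (hle.trans hM), max_eq_right (hm.trans hge)]
    exact rfl

lemma tildePi_closed {π : ℝ → ℝ} (hcont : ContinuousOn π (Icc 0 1))
    {cs ps : ℕ → ℝ} {s p : ℝ}
    (hcs : ∀ n, cs n ∈ Icc (0:ℝ) 1) (hs : s ∈ Icc (0:ℝ) 1)
    (hlim : Tendsto cs atTop (𝓝 s)) (hplim : Tendsto ps atTop (𝓝 p))
    (hmem : ∀ n, ps n ∈ tildePi π (cs n)) : p ∈ tildePi π s := by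
  have hπlim : Tendsto (fun n => π (cs n)) atTop (𝓝 (π s)) :=
    (hcont s hs).tendsto.comp (tendsto_nhdsWithin_iff.mpr ⟨hlim, .of_forall hcs⟩)
  rcases eq_or_lt_of_le hs.1 with h0 | h0
  · -- s = 0
    have hev : ∀ᶠ n in atTop, ps n ≤ π (cs n) := by
      filter_upwards [hlim.eventually (eventually_lt_nhds (by linarith [hs.2] : s < 1))] with n hn
        using tildePi_le hn (hmem n)
    have : p ≤ π s := le_of_tendsto_of_tendsto hplim hπlim hev
    rw [← h0]
    simp only [tildePi, if_pos rfl, mem_Iic]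
    rw [← h0] at this; exact this
  rcases eq_or_lt_of_le hs.2 with h1 | h1
  · -- s = 1
    have hev : ∀ᶠ n in atTop, π (cs n) ≤ ps n := by
      filter_upwards [hlim.eventually (eventually_gt_nhds (by linarith : (0:ℝ) < s))] with n hn
        using tildePi_ge hn (hmem n)
    have : π s ≤ p := le_of_tendsto_of_tendsto hπlim hplim hev
    rw [h1] at this ⊢
    simp only [tildePi, if_neg one_ne_zero, if_pos rfl, mem_Ici]
    exact this
  · -- interior
    have hev : ∀ᶠ n in atTop, ps n = π (cs n) := by
      filter_upwards [hlim.eventually (eventually_lt_nhds h1),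
        hlim.eventually (eventually_gt_nhds h0)] with n hn1 hn0
      exact le_antisymm (tildePi_le hn1 (hmem n)) (tildePi_ge hn0 (hmem n))
    have : p = π s := tendsto_nhds_unique (hplim.congr' hev) hπlim
    simp only [tildePi, if_neg h0.ne', if_neg h1.ne, mem_singleton_iff]
    exact this

/-- If `(c(a,b), d(a,b))` denotes the unique pair in `[0,1]²` solving the discrete
transmission system, then `(a,b) ↦ c(a,b)` and `(a,b) ↦ d(a,b)` are continuous on `[0,1]²`
and nondecreasing with respect to each of their arguments. -/
theorem stmt1
    (π₁ π₂ φ₁ φ₂ : ℝ → ℝ) (G₁ G₂ : ℝ → ℝ → ℝ) (δx : ℝ) (hδx : 0 < δx)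
    (hπ₁mono : StrictMonoOn π₁ (Icc 0 1)) (hπ₁lip : ∃ K, LipschitzOnWith K π₁ (Icc 0 1))
    (hπ₂mono : StrictMonoOn π₂ (Icc 0 1)) (hπ₂lip : ∃ K, LipschitzOnWith K π₂ (Icc 0 1))
    (hφ₁mono : StrictMonoOn φ₁ (Icc 0 1)) (hφ₁lip : ∃ K, LipschitzOnWith K φ₁ (Icc 0 1))
    (hφ₁zero : φ₁ 0 = 0)
    (hφ₂mono : StrictMonoOn φ₂ (Icc 0 1)) (hφ₂lip : ∃ K, LipschitzOnWith K φ₂ (Icc 0 1))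
    (hφ₂zero : φ₂ 0 = 0)
    (hG₁lip : ∃ K, LipschitzOnWith K (fun p : ℝ × ℝ => G₁ p.1 p.2) (Icc 0 1 ×ˢ Icc 0 1))
    (hG₁mono : ∀ b ∈ Icc (0:ℝ) 1, MonotoneOn (fun a => G₁ a b) (Icc 0 1))
    (hG₁anti : ∀ a ∈ Icc (0:ℝ) 1, AntitoneOn (fun b => G₁ a b) (Icc 0 1))
    (hG₂lip : ∃ K, LipschitzOnWith K (fun p : ℝ × ℝ => G₂ p.1 p.2) (Icc 0 1 ×ˢ Icc 0 1))
    (hG₂mono : ∀ b ∈ Icc (0:ℝ) 1, MonotoneOn (fun a => G₂ a b) (Icc 0 1))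
    (hG₂anti : ∀ a ∈ Icc (0:ℝ) 1, AntitoneOn (fun b => G₂ a b) (Icc 0 1))
    (c d : ℝ → ℝ → ℝ)
    (hcd : ∀ a ∈ Icc (0:ℝ) 1, ∀ b ∈ Icc (0:ℝ) 1,
      c a b ∈ Icc (0:ℝ) 1 ∧ d a b ∈ Icc (0:ℝ) 1 ∧
      G₁ a (c a b) - 2 * (φ₁ (c a b) - φ₁ a) / δx
        = G₂ (d a b) b - 2 * (φ₂ b - φ₂ (d a b)) / δx ∧
      Connects π₁ π₂ (c a b) (d a b))
    (huniq : ∀ a ∈ Icc (0:ℝ) 1, ∀ b ∈ Icc (0:ℝ) 1, ∀ c' d' : ℝ,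
      c' ∈ Icc (0:ℝ) 1 → d' ∈ Icc (0:ℝ) 1 →
      G₁ a c' - 2 * (φ₁ c' - φ₁ a) / δx = G₂ d' b - 2 * (φ₂ b - φ₂ d') / δx →
      Connects π₁ π₂ c' d' → c' = c a b ∧ d' = d a b) :
    ContinuousOn (fun p : ℝ × ℝ => c p.1 p.2) (Icc 0 1 ×ˢ Icc 0 1) ∧
    ContinuousOn (fun p : ℝ × ℝ => d p.1 p.2) (Icc 0 1 ×ˢ Icc 0 1) ∧
    (∀ b ∈ Icc (0:ℝ) 1, MonotoneOn (fun a => c a b) (Icc 0 1)) ∧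
    (∀ a ∈ Icc (0:ℝ) 1, MonotoneOn (fun b => c a b) (Icc 0 1)) ∧
    (∀ b ∈ Icc (0:ℝ) 1, MonotoneOn (fun a => d a b) (Icc 0 1)) ∧
    (∀ a ∈ Icc (0:ℝ) 1, MonotoneOn (fun b => d a b) (Icc 0 1)) := by
  -- continuity of data
  obtain ⟨Kπ₁, hKπ₁⟩ := hπ₁lip
  obtain ⟨Kπ₂, hKπ₂⟩ := hπ₂lip
  obtain ⟨Kφ₁, hKφ₁⟩ := hφ₁lip
  obtain ⟨Kφ₂, hKφ₂⟩ := hφ₂lip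
  obtain ⟨KG₁, hKG₁⟩ := hG₁lip
  obtain ⟨KG₂, hKG₂⟩ := hG₂lip
  have hπ₁cont := hKπ₁.continuousOn
  have hπ₂cont := hKπ₂.continuousOn
  have hφ₁cont := hKφ₁.continuousOn
  have hφ₂cont := hKφ₂.continuousOn
  have hG₁cont := hKG₁.continuousOn
  have hG₂cont := hKG₂.continuousOn
  -- the key comparison lemma
  have key : ∀ a a' b b' : ℝ, a ∈ Icc (0:ℝ) 1 → a' ∈ Icc (0:ℝ) 1 →
      b ∈ Icc (0:ℝ) 1 → b' ∈ Icc (0:ℝ) 1 → a ≤ a' → b ≤ b' →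
      c a b ≤ c a' b' ∧ d a b ≤ d a' b' := by
    intro a a' b b' ha ha' hb hb' haa hbb
    obtain ⟨hc₀, hd₀, heq₀, hcon₀⟩ := hcd a ha b hb
    obtain ⟨hc₁, hd₁, heq₁, hcon₁⟩ := hcd a' ha' b' hb'
    obtain ⟨p₀, hp₀1, hp₀2⟩ := hcon₀
    obtain ⟨p₁, hp₁1, hp₁2⟩ := hcon₁
    have h2 : G₁ a (c a b) - 2 * (φ₁ (c a b) - φ₁ a) / δx
        ≤ G₁ a' (c a b) - 2 * (φ₁ (c a b) - φ₁ a') / δx := by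
      have hG := hG₁mono (c a b) hc₀ ha ha' haa
      have hφ : φ₁ a ≤ φ₁ a' := hφ₁mono.monotoneOn ha ha' haa
      have hdiv : 2 * (φ₁ (c a b) - φ₁ a') / δx ≤ 2 * (φ₁ (c a b) - φ₁ a) / δx :=
        (div_le_div_iff_of_pos_right hδx).mpr (by linarith)
      simp only at hG; linarith
    have h3 : G₂ (d a b) b' - 2 * (φ₂ b' - φ₂ (d a b)) / δx
        ≤ G₂ (d a b) b - 2 * (φ₂ b - φ₂ (d a b)) / δx := by
      have hG := hG₂anti (d a b) hd₀ hb hb' hbb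
      have hφ : φ₂ b ≤ φ₂ b' := hφ₂mono.monotoneOn hb hb' hbb
      have hdiv : 2 * (φ₂ b - φ₂ (d a b)) / δx ≤ 2 * (φ₂ b' - φ₂ (d a b)) / δx :=
        (div_le_div_iff_of_pos_right hδx).mpr (by linarith)
      simp only at hG; linarith
    constructor
    · by_contra hlt
      push_neg at hlt
      have h1 : G₁ a' (c a b) - 2 * (φ₁ (c a b) - φ₁ a') / δx
          < G₁ a' (c a' b') - 2 * (φ₁ (c a' b') - φ₁ a') / δx := by
        have hG := hG₁anti a' ha' hc₁ hc₀ hlt.le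
        have hφ : φ₁ (c a' b') < φ₁ (c a b) := hφ₁mono hc₁ hc₀ hlt
        have hdiv : 2 * (φ₁ (c a' b') - φ₁ a') / δx < 2 * (φ₁ (c a b) - φ₁ a') / δx :=
          (div_lt_div_iff_of_pos_right hδx).mpr (by linarith)
        simp only at hG; linarith
      have hd : d a b < d a' b' := by
        by_contra h
        push_neg at h
        have hG := hG₂mono b' hb' hd₁ hd₀ h
        have hφ : φ₂ (d a' b') ≤ φ₂ (d a b) := hφ₂mono.monotoneOn hd₁ hd₀ h
        have hdiv : 2 * (φ₂ b' - φ₂ (d a b)) / δx ≤ 2 * (φ₂ b' - φ₂ (d a' b')) / δx :=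
          (div_le_div_iff_of_pos_right hδx).mpr (by linarith)
        simp only at hG; linarith
      exact absurd (tildePi_lt hπ₁mono hc₁ hc₀ hlt hp₁1 hp₀1)
        (not_lt.mpr (tildePi_lt hπ₂mono hd₀ hd₁ hd hp₀2 hp₁2).le)
    · by_contra hlt
      push_neg at hlt
      have h1 : G₂ (d a' b') b' - 2 * (φ₂ b' - φ₂ (d a' b')) / δx
          < G₂ (d a b) b' - 2 * (φ₂ b' - φ₂ (d a b)) / δx := by
        have hG := hG₂mono b' hb' hd₁ hd₀ hlt.le
        have hφ : φ₂ (d a' b') < φ₂ (d a b) := hφ₂mono hd₁ hd₀ hlt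
        have hdiv : 2 * (φ₂ b' - φ₂ (d a b)) / δx < 2 * (φ₂ b' - φ₂ (d a' b')) / δx :=
          (div_lt_div_iff_of_pos_right hδx).mpr (by linarith)
        simp only at hG; linarith
      have hc : c a b < c a' b' := by
        by_contra h
        push_neg at h
        have hG := hG₁anti a' ha' hc₁ hc₀ h
        have hφ : φ₁ (c a' b') ≤ φ₁ (c a b) := hφ₁mono.monotoneOn hc₁ hc₀ h
        have hdiv : 2 * (φ₁ (c a' b') - φ₁ a') / δx ≤ 2 * (φ₁ (c a b) - φ₁ a') / δx :=
          (div_le_div_iff_of_pos_right hδx).mpr (by linarith)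
        simp only at hG; linarith
      exact absurd (tildePi_lt hπ₁mono hc₀ hc₁ hc hp₀1 hp₁1)
        (not_lt.mpr (tildePi_lt hπ₂mono hd₁ hd₀ hlt hp₁2 hp₀2).le)
  set sq : Set (ℝ × ℝ) := Icc 0 1 ×ˢ Icc 0 1 with hsq
  set m : ℝ := min (π₁ 0) (π₂ 0) with hm
  set M : ℝ := max (π₁ 1) (π₂ 1) with hM
  have hmπ₁ : m ≤ π₁ 0 := min_le_left _ _
  have hmπ₂ : m ≤ π₂ 0 := min_le_right _ _
  have hMπ₁ : π₁ 1 ≤ M := le_max_left _ _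
  have hMπ₂ : π₂ 1 ≤ M := le_max_right _ _
  have hmM : m ≤ M :=
    hmπ₁.trans ((hπ₁mono.monotoneOn (by norm_num) (by norm_num) (by norm_num)).trans hMπ₁)
  have hcompact3 : IsCompact ((Icc (0:ℝ) 1) ×ˢ ((Icc (0:ℝ) 1) ×ˢ (Icc m M))) :=
    isCompact_Icc.prod (isCompact_Icc.prod isCompact_Icc)
  have contCD : ∀ x ∈ sq, Tendsto (fun p : ℝ × ℝ => (c p.1 p.2, d p.1 p.2))
      (𝓝[sq] x) (𝓝 (c x.1 x.2, d x.1 x.2)) := by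
    rintro ⟨a, b⟩ ⟨ha, hb⟩
    apply tendsto_of_subseq_tendsto
    intro ns hns
    rw [tendsto_nhdsWithin_iff] at hns
    obtain ⟨hns1, hns2⟩ := hns
    set w : ℕ → ℝ × ℝ := fun n => if ns n ∈ sq then ns n else (a, b) with hw
    have hwmem : ∀ n, w n ∈ sq := by
      intro n
      by_cases h : ns n ∈ sq
      · simp [hw, h]
      · simp only [hw, if_neg h]; exact ⟨ha, hb⟩
    have hwe : ∀ᶠ n in atTop, w n = ns n := hns2.mono fun n h => by simp [hw, h]
    have hwlim : Tendsto w atTop (𝓝 (a, b)) :=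
      hns1.congr' (hwe.mono fun n h => h.symm)
    have hP : ∀ n, ∃ p, p ∈ Icc m M ∧ p ∈ tildePi π₁ (c (w n).1 (w n).2) ∧
        p ∈ tildePi π₂ (d (w n).1 (w n).2) := by
      intro n
      obtain ⟨hcmem, hdmem, -, hconn⟩ := hcd (w n).1 (hwmem n).1 (w n).2 (hwmem n).2
      obtain ⟨p, hp1, hp2⟩ := hconn
      refine ⟨max m (min p M), ⟨le_max_left _ _, max_le hmM (min_le_right _ _)⟩,
        tildePi_clamp hπ₁mono hcmem hmπ₁ hMπ₁ hp1,
        tildePi_clamp hπ₂mono hdmem hmπ₂ hMπ₂ hp2⟩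
    choose ps hps1 hps2 hps3 using hP
    set v : ℕ → ℝ × ℝ × ℝ := fun n => (c (w n).1 (w n).2, d (w n).1 (w n).2, ps n) with hv
    have hvmem : ∀ n, v n ∈ (Icc (0:ℝ) 1) ×ˢ ((Icc (0:ℝ) 1) ×ˢ (Icc m M)) := by
      intro n
      obtain ⟨hcmem, hdmem, -, -⟩ := hcd (w n).1 (hwmem n).1 (w n).2 (hwmem n).2
      exact ⟨hcmem, hdmem, hps1 n⟩
    obtain ⟨⟨c₀, d₀, p₀⟩, hlimmem, ms, hms, hmslim⟩ := hcompact3.tendsto_subseq hvmem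
    obtain ⟨hc₀mem, hd₀mem, hp₀mem⟩ := hlimmem
    have hclim : Tendsto (fun n => c (w (ms n)).1 (w (ms n)).2) atTop (𝓝 c₀) :=
      (continuous_fst.tendsto _).comp hmslim
    have hdlim : Tendsto (fun n => d (w (ms n)).1 (w (ms n)).2) atTop (𝓝 d₀) :=
      ((continuous_fst.comp continuous_snd).tendsto _).comp hmslim
    have hplim : Tendsto (fun n => ps (ms n)) atTop (𝓝 p₀) :=
      ((continuous_snd.comp continuous_snd).tendsto _).comp hmslim
    have hwms : Tendsto (fun n => w (ms n)) atTop (𝓝 (a, b)) :=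
      hwlim.comp hms.tendsto_atTop
    have halim : Tendsto (fun n => (w (ms n)).1) atTop (𝓝 a) :=
      (continuous_fst.tendsto _).comp hwms
    have hblim : Tendsto (fun n => (w (ms n)).2) atTop (𝓝 b) :=
      (continuous_snd.tendsto _).comp hwms
    have hcmemn : ∀ n, c (w (ms n)).1 (w (ms n)).2 ∈ Icc (0:ℝ) 1 :=
      fun n => (hvmem (ms n)).1
    have hdmemn : ∀ n, d (w (ms n)).1 (w (ms n)).2 ∈ Icc (0:ℝ) 1 :=
      fun n => (hvmem (ms n)).2.1
    have hamemn : ∀ n, (w (ms n)).1 ∈ Icc (0:ℝ) 1 := fun n => (hwmem (ms n)).1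
    have hbmemn : ∀ n, (w (ms n)).2 ∈ Icc (0:ℝ) 1 := fun n => (hwmem (ms n)).2
    -- limits of all the terms in the equation
    have hG₁lim : Tendsto (fun n => G₁ (w (ms n)).1 (c (w (ms n)).1 (w (ms n)).2))
        atTop (𝓝 (G₁ a c₀)) :=
      (hG₁cont (a, c₀) ⟨ha, hc₀mem⟩).tendsto.comp
        (tendsto_nhdsWithin_iff.mpr ⟨halim.prodMk_nhds hclim,
          .of_forall fun n => ⟨hamemn n, hcmemn n⟩⟩)
    have hG₂lim : Tendsto (fun n => G₂ (d (w (ms n)).1 (w (ms n)).2) (w (ms n)).2)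
        atTop (𝓝 (G₂ d₀ b)) :=
      (hG₂cont (d₀, b) ⟨hd₀mem, hb⟩).tendsto.comp
        (tendsto_nhdsWithin_iff.mpr ⟨hdlim.prodMk_nhds hblim,
          .of_forall fun n => ⟨hdmemn n, hbmemn n⟩⟩)
    have hφ₁clim : Tendsto (fun n => φ₁ (c (w (ms n)).1 (w (ms n)).2)) atTop (𝓝 (φ₁ c₀)) :=
      (hφ₁cont c₀ hc₀mem).tendsto.comp
        (tendsto_nhdsWithin_iff.mpr ⟨hclim, .of_forall hcmemn⟩)
    have hφ₁alim : Tendsto (fun n => φ₁ (w (ms n)).1) atTop (𝓝 (φ₁ a)) :=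
      (hφ₁cont a ha).tendsto.comp
        (tendsto_nhdsWithin_iff.mpr ⟨halim, .of_forall hamemn⟩)
    have hφ₂dlim : Tendsto (fun n => φ₂ (d (w (ms n)).1 (w (ms n)).2)) atTop (𝓝 (φ₂ d₀)) :=
      (hφ₂cont d₀ hd₀mem).tendsto.comp
        (tendsto_nhdsWithin_iff.mpr ⟨hdlim, .of_forall hdmemn⟩)
    have hφ₂blim : Tendsto (fun n => φ₂ (w (ms n)).2) atTop (𝓝 (φ₂ b)) :=
      (hφ₂cont b hb).tendsto.comp
        (tendsto_nhdsWithin_iff.mpr ⟨hblim, .of_forall hbmemn⟩)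
    have hL : Tendsto (fun n => G₁ (w (ms n)).1 (c (w (ms n)).1 (w (ms n)).2)
        - 2 * (φ₁ (c (w (ms n)).1 (w (ms n)).2) - φ₁ (w (ms n)).1) / δx)
        atTop (𝓝 (G₁ a c₀ - 2 * (φ₁ c₀ - φ₁ a) / δx)) :=
      hG₁lim.sub (((hφ₁clim.sub hφ₁alim).const_mul 2).div_const δx)
    have hR : Tendsto (fun n => G₂ (d (w (ms n)).1 (w (ms n)).2) (w (ms n)).2
        - 2 * (φ₂ (w (ms n)).2 - φ₂ (d (w (ms n)).1 (w (ms n)).2)) / δx)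
        atTop (𝓝 (G₂ d₀ b - 2 * (φ₂ b - φ₂ d₀) / δx)) :=
      hG₂lim.sub (((hφ₂blim.sub hφ₂dlim).const_mul 2).div_const δx)
    have heqn : ∀ n, G₁ (w (ms n)).1 (c (w (ms n)).1 (w (ms n)).2)
        - 2 * (φ₁ (c (w (ms n)).1 (w (ms n)).2) - φ₁ (w (ms n)).1) / δx
        = G₂ (d (w (ms n)).1 (w (ms n)).2) (w (ms n)).2
        - 2 * (φ₂ (w (ms n)).2 - φ₂ (d (w (ms n)).1 (w (ms n)).2)) / δx :=
      fun n => (hcd (w (ms n)).1 (hamemn n) (w (ms n)).2 (hbmemn n)).2.2.1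
    have heqlim : G₁ a c₀ - 2 * (φ₁ c₀ - φ₁ a) / δx = G₂ d₀ b - 2 * (φ₂ b - φ₂ d₀) / δx :=
      tendsto_nhds_unique (hL.congr heqn) hR
    have hconn : Connects π₁ π₂ c₀ d₀ :=
      ⟨p₀, tildePi_closed hπ₁cont hcmemn hc₀mem hclim hplim (fun n => hps2 (ms n)),
        tildePi_closed hπ₂cont hdmemn hd₀mem hdlim hplim (fun n => hps3 (ms n))⟩
    obtain ⟨hceq, hdeq⟩ := huniq a ha b hb c₀ d₀ hc₀mem hd₀mem heqlim hconn
    refine ⟨ms, ?_⟩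
    have hfin : Tendsto (fun n => (c (w (ms n)).1 (w (ms n)).2, d (w (ms n)).1 (w (ms n)).2))
        atTop (𝓝 (c a b, d a b)) := by
      rw [← hceq, ← hdeq]
      exact hclim.prodMk_nhds hdlim
    refine hfin.congr' ?_
    filter_upwards [hms.tendsto_atTop.eventually hwe] with n h
    rw [h]
  refine ⟨?_, ?_, ?_, ?_, ?_, ?_⟩
  · intro x hx
    exact ((continuous_fst.tendsto _).comp (contCD x hx) : _)
  · intro x hx
    exact ((continuous_snd.tendsto _).comp (contCD x hx) : _)
  · exact fun b hb a ha a' ha' haa => (key a a' b b ha ha' hb hb haa le_rfl).1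
  · exact fun a ha b hb b' hb' hbb => (key a a b b' ha ha hb hb' le_rfl hbb).1
  · exact fun b hb a ha a' ha' haa => (key a a' b b ha ha' hb hb haa le_rfl).2
  · exact fun a ha b hb b' hb' hbb => (key a a b b' ha ha hb hb' le_rfl hbb).2
end

section
/- Let (a,b)∈[0,1]² and let (c,d)∈[0,1]² be the unique pair satisfying G_1(a,c)−2(φ_1(c)−φ_1(a))/δx = G_2(d,b)−2(φ_2(b)−φ_2(d))/δx and π̃_1(c)∩π̃_2(d)≠∅, and let F denote this common value, F = G_1(a,c)−2(φ_1(c)−φ_1(a))/δx. Then (π_1(c)−π_2(d))·F ≥ −|q|·|π_1(c)−π_2(d)|. -/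
open Set

/-- If `(c,d) ∈ [0,1]²` solves the discrete transmission system associated to
`(a,b) ∈ [0,1]²`, and `F = G₁(a,c) - 2(φ₁(c)-φ₁(a))/δx` is the corresponding interface
flux, then `(π₁(c) - π₂(d)) · F ≥ -|q| · |π₁(c) - π₂(d)|`. -/
theorem stmt2
    (π₁ π₂ φ₁ φ₂ : ℝ → ℝ) (G₁ G₂ : ℝ → ℝ → ℝ) (f₁ f₂ : ℝ → ℝ) (q : ℝ)
    (δx : ℝ) (hδx : 0 < δx)
    (hπ₁mono : StrictMonoOn π₁ (Icc 0 1)) (hπ₁lip : ∃ K, LipschitzOnWith K π₁ (Icc 0 1))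
    (hπ₂mono : StrictMonoOn π₂ (Icc 0 1)) (hπ₂lip : ∃ K, LipschitzOnWith K π₂ (Icc 0 1))
    (hφ₁mono : StrictMonoOn φ₁ (Icc 0 1)) (hφ₁lip : ∃ K, LipschitzOnWith K φ₁ (Icc 0 1))
    (hφ₁zero : φ₁ 0 = 0)
    (hφ₂mono : StrictMonoOn φ₂ (Icc 0 1)) (hφ₂lip : ∃ K, LipschitzOnWith K φ₂ (Icc 0 1))
    (hφ₂zero : φ₂ 0 = 0)
    (hG₁lip : ∃ K, LipschitzOnWith K (fun p : ℝ × ℝ => G₁ p.1 p.2) (Icc 0 1 ×ˢ Icc 0 1))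
    (hG₁mono : ∀ b ∈ Icc (0:ℝ) 1, MonotoneOn (fun a => G₁ a b) (Icc 0 1))
    (hG₁anti : ∀ a ∈ Icc (0:ℝ) 1, AntitoneOn (fun b => G₁ a b) (Icc 0 1))
    (hG₂lip : ∃ K, LipschitzOnWith K (fun p : ℝ × ℝ => G₂ p.1 p.2) (Icc 0 1 ×ˢ Icc 0 1))
    (hG₂mono : ∀ b ∈ Icc (0:ℝ) 1, MonotoneOn (fun a => G₂ a b) (Icc 0 1))
    (hG₂anti : ∀ a ∈ Icc (0:ℝ) 1, AntitoneOn (fun b => G₂ a b) (Icc 0 1))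
    (hf₁lip : ∃ K, LipschitzOnWith K f₁ (Icc 0 1))
    (hf₂lip : ∃ K, LipschitzOnWith K f₂ (Icc 0 1))
    (hG₁diag : ∀ s ∈ Icc (0:ℝ) 1, G₁ s s = f₁ s)
    (hG₂diag : ∀ s ∈ Icc (0:ℝ) 1, G₂ s s = f₂ s)
    (hf₁0 : f₁ 0 = 0) (hf₂0 : f₂ 0 = 0) (hf₁1 : f₁ 1 = q) (hf₂1 : f₂ 1 = q)
    (a b c d : ℝ)
    (ha : a ∈ Icc (0:ℝ) 1) (hb : b ∈ Icc (0:ℝ) 1)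
    (hc : c ∈ Icc (0:ℝ) 1) (hd : d ∈ Icc (0:ℝ) 1)
    (heq : G₁ a c - 2 * (φ₁ c - φ₁ a) / δx = G₂ d b - 2 * (φ₂ b - φ₂ d) / δx)
    (hconn : Connects π₁ π₂ c d) :
    (π₁ c - π₂ d) * (G₁ a c - 2 * (φ₁ c - φ₁ a) / δx) ≥ -|q| * |π₁ c - π₂ d| := by
  obtain ⟨p, hp1, hp2⟩ := hconn
  set F := G₁ a c - 2 * (φ₁ c - φ₁ a) / δx with hF
  have h01 : (0:ℝ) ∈ Icc (0:ℝ) 1 := ⟨le_refl 0, zero_le_one⟩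
  have h11 : (1:ℝ) ∈ Icc (0:ℝ) 1 := ⟨zero_le_one, le_refl 1⟩
  -- case analysis tools
  have hcase1 : π₂ d < π₁ c → c = 0 ∨ d = 1 := by
    intro hlt
    by_contra h
    push_neg at h
    obtain ⟨hc0, hd1⟩ := h
    unfold tildePi at hp1 hp2
    rw [if_neg hc0] at hp1
    rw [if_neg hd1] at hp2
    by_cases hc1 : c = 1
    · rw [if_pos hc1] at hp1
      by_cases hd0 : d = 0
      · rw [if_pos hd0] at hp2
        have := le_trans (Set.mem_Ici.mp hp1) (Set.mem_Iic.mp hp2)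
        have hcd : π₂ 0 < π₁ c := hd0 ▸ hlt
        have : π₁ c ≤ π₂ 0 := by
          calc π₁ c = π₁ 1 := by rw [hc1]
          _ ≤ p := hp1
          _ ≤ π₂ 0 := hp2
        linarith
      · rw [if_neg hd0] at hp2
        simp only [mem_singleton_iff] at hp2
        have : π₁ c ≤ π₂ d := by
          calc π₁ c = π₁ 1 := by rw [hc1]
          _ ≤ p := hp1
          _ = π₂ d := hp2
        linarith
    · rw [if_neg hc1] at hp1
      simp only [mem_singleton_iff] at hp1
      by_cases hd0 : d = 0
      · rw [if_pos hd0] at hp2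
        have : π₁ c ≤ π₂ d := by rw [hd0, ← hp1]; exact hp2
        linarith
      · rw [if_neg hd0] at hp2
        simp only [mem_singleton_iff] at hp2
        have := hp1.symm.trans hp2; linarith
  have hcase2 : π₁ c < π₂ d → c = 1 ∨ d = 0 := by
    intro hlt
    by_contra h
    push_neg at h
    obtain ⟨hc1, hd0⟩ := h
    unfold tildePi at hp1 hp2
    rw [if_neg hd0] at hp2
    by_cases hc0 : c = 0
    · rw [if_pos hc0] at hp1
      by_cases hd1 : d = 1
      · rw [if_pos hd1] at hp2
        have : π₂ d ≤ π₁ c := by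
          calc π₂ d = π₂ 1 := by rw [hd1]
          _ ≤ p := hp2
          _ ≤ π₁ 0 := hp1
          _ = π₁ c := by rw [hc0]
        linarith
      · rw [if_neg hd1] at hp2
        simp only [mem_singleton_iff] at hp2
        have : π₂ d ≤ π₁ c := by rw [hc0, ← hp2]; exact hp1
        linarith
    · rw [if_neg hc0, if_neg hc1] at hp1
      simp only [mem_singleton_iff] at hp1
      by_cases hd1 : d = 1
      · rw [if_pos hd1] at hp2
        have : π₂ d ≤ π₁ c := by
          calc π₂ d = π₂ 1 := by rw [hd1]
          _ ≤ p := hp2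
          _ = π₁ c := hp1
        linarith
      · rw [if_neg hd1] at hp2
        simp only [mem_singleton_iff] at hp2
        have := hp1.symm.trans hp2; linarith
  rcases lt_trichotomy (π₁ c) (π₂ d) with hlt | heqp | hgt
  · -- need F ≤ |q|
    have hFle : F ≤ |q| := by
      rcases hcase2 hlt with hc1 | hd0
      · have hφ : φ₁ a ≤ φ₁ 1 := by
          rcases eq_or_lt_of_le ha.2 with h | h
          · rw [h]
          · exact le_of_lt (hφ₁mono ha h11 h)
        have hG : G₁ a 1 ≤ G₁ 1 1 := hG₁mono 1 h11 ha h11 ha.2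
        have : G₁ 1 1 = q := by rw [hG₁diag 1 h11, hf₁1]
        have hq : q ≤ |q| := le_abs_self q
        have h2 : 0 ≤ 2 * (φ₁ 1 - φ₁ a) / δx := div_nonneg (by linarith) hδx.le
        rw [hF, hc1]; linarith
      · have hφ : 0 ≤ φ₂ b := by
          rw [← hφ₂zero]
          rcases eq_or_lt_of_le hb.1 with h | h
          · rw [← h]
          · exact le_of_lt (hφ₂mono h01 hb h)
        have hG : G₂ 0 b ≤ G₂ 0 0 := hG₂anti 0 h01 h01 hb hb.1
        have : G₂ 0 0 = 0 := by rw [hG₂diag 0 h01, hf₂0]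
        have h2 : 0 ≤ 2 * (φ₂ b - φ₂ 0) / δx := div_nonneg (by rw [hφ₂zero]; linarith) hδx.le
        have hq : 0 ≤ |q| := abs_nonneg q
        rw [heq, hd0]; linarith
    have habs : |π₁ c - π₂ d| = π₂ d - π₁ c := by
      rw [abs_of_nonpos (by linarith)]; ring
    rw [habs]
    nlinarith [hFle, sub_pos.mpr hlt]
  · rw [heqp]; simp
  · -- need F ≥ -|q|
    have hFge : -|q| ≤ F := by
      rcases hcase1 hgt with hc0 | hd1
      · have hφ : 0 ≤ φ₁ a := by
          rw [← hφ₁zero]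
          rcases eq_or_lt_of_le ha.1 with h | h
          · rw [← h]
          · exact le_of_lt (hφ₁mono h01 ha h)
        have hG : G₁ 0 0 ≤ G₁ a 0 := hG₁mono 0 h01 h01 ha ha.1
        have : G₁ 0 0 = 0 := by rw [hG₁diag 0 h01, hf₁0]
        have hq : 0 ≤ |q| := abs_nonneg q
        rw [hF, hc0, hφ₁zero]
        have h2 : 0 ≤ 2 * φ₁ a / δx := by positivity
        have : 2 * (0 - φ₁ a) / δx = -(2 * φ₁ a / δx) := by ring
        rw [this]; linarith
      · have hφ : φ₂ b ≤ φ₂ 1 := by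
          rcases eq_or_lt_of_le hb.2 with h | h
          · rw [h]
          · exact le_of_lt (hφ₂mono hb h11 h)
        have hG : G₂ 1 1 ≤ G₂ 1 b := hG₂anti 1 h11 hb h11 hb.2
        have : G₂ 1 1 = q := by rw [hG₂diag 1 h11, hf₂1]
        have hq : -|q| ≤ q := neg_abs_le q
        rw [heq, hd1]
        have h2 : 2 * (φ₂ b - φ₂ 1) / δx ≤ 0 := by
          apply div_nonpos_of_nonpos_of_nonneg <;> [linarith; linarith]
        linarith
    have habs : |π₁ c - π₂ d| = π₁ c - π₂ d := abs_of_nonneg (by linarith)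
    rw [habs]
    nlinarith [hFge, sub_pos.mpr hgt]
end

section
/- Let (u^n)_{n=0,…,M} be a discrete solution and (v^n)_{n=0,…,M} a discrete supersolution (for the same boundary data ū^n, ū̄^n). Then for every n∈{0,…,M}, ∑_{j=−N}^{N−1} ϕ_{i(j)} (u^n_{j+1/2}−v^n_{j+1/2})⁺ δx ≤ ∑_{j=−N}^{N−1} ϕ_{i(j)} (u^0_{j+1/2}−v^0_{j+1/2})⁺ δx. Symmetrically, if (w^n) is a discrete subsolution, then for every n∈{0,…,M}, ∑_{j=−N}^{N−1} ϕ_{i(j)} (u^n_{j+1/2}−w^n_{j+1/2})⁻ δx ≤ ∑_{j=−N}^{N−1} ϕ_{i(j)} (u^0_{j+1/2}−w^0_{j+1/2})⁻ δx, where s⁺=max(s,0) and s⁻=max(−s,0). -/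
open Set

noncomputable section

/-- The porosity `ϕ_{i(j)}` of the cell `(x_j, x_{j+1})` (indexed by `j`, representing the
unknown `u_{j+1/2}`): `ϕ₁` if `j < 0` (cell in `Ω₁`), `ϕ₂` if `j ≥ 0` (cell in `Ω₂`). -/
def phiCoef (ϕ₁ ϕ₂ : ℝ) (j : ℤ) : ℝ := if j < 0 then ϕ₁ else ϕ₂

/-- The numerical flux `F_j[v]` through `x_j`, for a vector `v` (where `v j` stands for
`v_{j+1/2}`), with boundary data `ub = ū`, `uB = ū̄` and interface function `c`. -/
def numFlux (G₁ G₂ : ℝ → ℝ → ℝ) (φ₁ φ₂ : ℝ → ℝ) (c : ℝ → ℝ → ℝ) (δx : ℝ) (N : ℤ)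
    (ub uB : ℝ) (v : ℤ → ℝ) (j : ℤ) : ℝ :=
  if j = -N then G₁ ub (v (-N))
  else if j = N then G₂ (v (N - 1)) uB
  else if j < 0 then G₁ (v (j - 1)) (v j) - (φ₁ (v j) - φ₁ (v (j - 1))) / δx
  else if j = 0 then
    G₁ (v (-1)) (c (v (-1)) (v 0)) - 2 * (φ₁ (c (v (-1)) (v 0)) - φ₁ (v (-1))) / δx
  else G₂ (v (j - 1)) (v j) - (φ₂ (v j) - φ₂ (v (j - 1))) / δx

/-- The left-hand side of the implicit finite volume scheme at time step `n → n+1`,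
cell `j`. -/
def schemeLHS (G₁ G₂ : ℝ → ℝ → ℝ) (φ₁ φ₂ : ℝ → ℝ) (c : ℝ → ℝ → ℝ)
    (ϕ₁ ϕ₂ δx δt : ℝ) (N : ℤ) (ubar ubbar : ℕ → ℝ) (u : ℕ → ℤ → ℝ)
    (n : ℕ) (j : ℤ) : ℝ :=
  phiCoef ϕ₁ ϕ₂ j * (u (n + 1) j - u n j) * δx / δt
    + numFlux G₁ G₂ φ₁ φ₂ c δx N (ubar (n + 1)) (ubbar (n + 1)) (u (n + 1)) (j + 1)
    - numFlux G₁ G₂ φ₁ φ₂ c δx N (ubar (n + 1)) (ubbar (n + 1)) (u (n + 1)) j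

/-- `u` takes values in `[0,1]` on the computational cells up to time level `M`. -/
def InRange (N : ℤ) (M : ℕ) (u : ℕ → ℤ → ℝ) : Prop :=
  ∀ n ≤ M, ∀ j ∈ Finset.Icc (-N) (N - 1), u n j ∈ Set.Icc (0 : ℝ) 1

/-- `u` is a discrete solution of the implicit finite volume scheme. -/
def IsDiscreteSolution (G₁ G₂ : ℝ → ℝ → ℝ) (φ₁ φ₂ : ℝ → ℝ) (c : ℝ → ℝ → ℝ)
    (ϕ₁ ϕ₂ δx δt : ℝ) (N : ℤ) (M : ℕ) (ubar ubbar : ℕ → ℝ) (u : ℕ → ℤ → ℝ) : Prop :=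
  InRange N M u ∧ ∀ n < M, ∀ j ∈ Finset.Icc (-N) (N - 1),
    schemeLHS G₁ G₂ φ₁ φ₂ c ϕ₁ ϕ₂ δx δt N ubar ubbar u n j = 0

/-- `u` is a discrete supersolution of the implicit finite volume scheme. -/
def IsDiscreteSupersolution (G₁ G₂ : ℝ → ℝ → ℝ) (φ₁ φ₂ : ℝ → ℝ) (c : ℝ → ℝ → ℝ)
    (ϕ₁ ϕ₂ δx δt : ℝ) (N : ℤ) (M : ℕ) (ubar ubbar : ℕ → ℝ) (u : ℕ → ℤ → ℝ) : Prop :=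
  InRange N M u ∧ ∀ n < M, ∀ j ∈ Finset.Icc (-N) (N - 1),
    0 ≤ schemeLHS G₁ G₂ φ₁ φ₂ c ϕ₁ ϕ₂ δx δt N ubar ubbar u n j

/-- `u` is a discrete subsolution of the implicit finite volume scheme. -/
def IsDiscreteSubsolution (G₁ G₂ : ℝ → ℝ → ℝ) (φ₁ φ₂ : ℝ → ℝ) (c : ℝ → ℝ → ℝ)
    (ϕ₁ ϕ₂ δx δt : ℝ) (N : ℤ) (M : ℕ) (ubar ubbar : ℕ → ℝ) (u : ℕ → ℤ → ℝ) : Prop :=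
  InRange N M u ∧ ∀ n < M, ∀ j ∈ Finset.Icc (-N) (N - 1),
    schemeLHS G₁ G₂ φ₁ φ₂ c ϕ₁ ϕ₂ δx δt N ubar ubbar u n j ≤ 0

private lemma Icc_split_top' (a b : ℤ) (h : a ≤ b + 1) (f : ℤ → ℝ) :
    ∑ j ∈ Finset.Icc a (b+1), f j = (∑ j ∈ Finset.Icc a b, f j) + f (b+1) := by
  have he : Finset.Icc a (b+1) = insert (b+1) (Finset.Icc a b) := by
    ext x; simp only [Finset.mem_Icc, Finset.mem_insert]; omega
  rw [he, Finset.sum_insert (by simp only [Finset.mem_Icc]; omega), add_comm]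

private lemma abel_sum' (f g : ℤ → ℝ) (a b : ℤ) (hab : a ≤ b) :
    ∑ j ∈ Finset.Icc a b, f j * (g j - g (j+1))
      = f a * g a - f b * g (b+1)
        + ∑ j ∈ Finset.Icc (a+1) b, (f j - f (j-1)) * g j := by
  obtain ⟨k, rfl⟩ : ∃ k : ℕ, b = a + k := ⟨(b - a).toNat, by omega⟩
  clear hab
  induction k with
  | zero =>
      rw [show a + ((0:ℕ):ℤ) = a by push_cast; ring, Finset.Icc_self, Finset.sum_singleton,
        Finset.Icc_eq_empty (by omega : ¬ a + 1 ≤ a), Finset.sum_empty]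
      ring
  | succ k ih =>
      rw [show a + ((k+1:ℕ):ℤ) = (a + k) + 1 by push_cast; ring,
        Icc_split_top' a (a + k) (by omega), Icc_split_top' (a+1) (a + k) (by omega), ih,
        add_sub_cancel_right]
      ring

private lemma abel_nonpos' (f g : ℤ → ℝ) (a b : ℤ) (hab : a ≤ b)
    (h1 : f a * g a ≤ 0) (h2 : 0 ≤ f b * g (b+1))
    (h3 : ∀ j, a + 1 ≤ j → j ≤ b → (f j - f (j-1)) * g j ≤ 0) :
    ∑ j ∈ Finset.Icc a b, f j * (g j - g (j+1)) ≤ 0 := by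
  rw [abel_sum' f g a b hab]
  have h4 : ∑ j ∈ Finset.Icc (a+1) b, (f j - f (j-1)) * g j ≤ 0 :=
    Finset.sum_nonpos (fun j hj => by
      rw [Finset.mem_Icc] at hj; exact h3 j hj.1 hj.2)
  linarith

private lemma graph_lt' {π : ℝ → ℝ} (hπ : StrictMonoOn π (Icc 0 1))
    {s t p q : ℝ} (hs : s ∈ Icc (0:ℝ) 1) (ht : t ∈ Icc (0:ℝ) 1) (hst : s < t)
    (hp : p ∈ tildePi π s) (hq : q ∈ tildePi π t) : p < q := by
  unfold tildePi at hp hq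
  have hs1 : s ≠ 1 := fun h => by rw [h] at hst; linarith [ht.2]
  have ht0 : t ≠ 0 := fun h => by rw [h] at hst; linarith [hs.1]
  rw [if_neg ht0] at hq
  by_cases hs0 : s = 0
  · rw [if_pos hs0] at hp
    rw [Set.mem_Iic] at hp
    subst hs0
    by_cases ht1 : t = 1
    · rw [if_pos ht1, Set.mem_Ici] at hq
      subst ht1
      have := hπ hs ht hst
      linarith
    · rw [if_neg ht1, Set.mem_singleton_iff] at hq
      have := hπ hs ht hst
      rw [hq]; linarith
  · rw [if_neg hs0, if_neg hs1, Set.mem_singleton_iff] at hp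
    by_cases ht1 : t = 1
    · rw [if_pos ht1, Set.mem_Ici] at hq
      have := hπ hs ht hst
      rw [ht1] at this
      rw [hp]; linarith
    · rw [if_neg ht1, Set.mem_singleton_iff] at hq
      rw [hp, hq]; exact hπ hs ht hst

private lemma interface_mono'
    (π₁ π₂ φ₁ φ₂ : ℝ → ℝ) (G₁ G₂ : ℝ → ℝ → ℝ) (δx : ℝ) (hδx : 0 < δx)
    (hπ₁mono : StrictMonoOn π₁ (Icc 0 1)) (hπ₂mono : StrictMonoOn π₂ (Icc 0 1))
    (hφ₁mono : MonotoneOn φ₁ (Icc 0 1)) (hφ₂mono : MonotoneOn φ₂ (Icc 0 1))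
    (hG₁mono : ∀ b ∈ Icc (0:ℝ) 1, MonotoneOn (fun a => G₁ a b) (Icc 0 1))
    (hG₁anti : ∀ a ∈ Icc (0:ℝ) 1, AntitoneOn (fun b => G₁ a b) (Icc 0 1))
    (hG₂mono : ∀ b ∈ Icc (0:ℝ) 1, MonotoneOn (fun a => G₂ a b) (Icc 0 1))
    (hG₂anti : ∀ a ∈ Icc (0:ℝ) 1, AntitoneOn (fun b => G₂ a b) (Icc 0 1))
    (c d : ℝ → ℝ → ℝ)
    (hcd : ∀ a ∈ Icc (0:ℝ) 1, ∀ b ∈ Icc (0:ℝ) 1,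
      c a b ∈ Icc (0:ℝ) 1 ∧ d a b ∈ Icc (0:ℝ) 1 ∧
        G₁ a (c a b) - 2 * (φ₁ (c a b) - φ₁ a) / δx
          = G₂ (d a b) b - 2 * (φ₂ b - φ₂ (d a b)) / δx ∧
        Connects π₁ π₂ (c a b) (d a b))
    {a a' b b' : ℝ} (ha : a ∈ Icc (0:ℝ) 1) (ha' : a' ∈ Icc (0:ℝ) 1)
    (hb : b ∈ Icc (0:ℝ) 1) (hb' : b' ∈ Icc (0:ℝ) 1)
    (haa : a ≤ a') (hbb : b' ≤ b) :
    G₁ a (c a b) - 2 * (φ₁ (c a b) - φ₁ a) / δx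
      ≤ G₁ a' (c a' b') - 2 * (φ₁ (c a' b') - φ₁ a') / δx := by
  obtain ⟨hc1, hd1, heq1, hcon1⟩ := hcd a ha b hb
  obtain ⟨hc2, hd2, heq2, hcon2⟩ := hcd a' ha' b' hb'
  by_contra hcon
  push_neg at hcon
  -- hcon : Ψ a' c2 < Ψ a c1
  -- Step 1 : d (a' b') < d (a b)
  have hstep1 : d a' b' < d a b := by
    by_contra hle
    push_neg at hle   -- d a b ≤ d a' b'
    have e1 : G₂ (d a b) b ≤ G₂ (d a' b') b := hG₂mono b hb hd1 hd2 hle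
    have e2 : φ₂ (d a b) ≤ φ₂ (d a' b') := hφ₂mono hd1 hd2 hle
    have e3 : G₂ (d a' b') b ≤ G₂ (d a' b') b' := hG₂anti (d a' b') hd2 hb' hb hbb
    have e4 : φ₂ b' ≤ φ₂ b := hφ₂mono hb' hb hbb
    have e5 : 2 * (φ₂ b' - φ₂ (d a' b')) / δx ≤ 2 * (φ₂ b - φ₂ (d a b)) / δx :=
      div_le_div_of_nonneg_right (by linarith) hδx.le
    rw [heq1, heq2] at hcon
    linarith
  -- Step 2 : c a b < c a' b'
  have hstep2 : c a b < c a' b' := by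
    by_contra hle
    push_neg at hle   -- c a' b' ≤ c a b
    have e1 : G₁ a (c a b) ≤ G₁ a' (c a b) := hG₁mono (c a b) hc1 ha ha' haa
    have e2 : φ₁ a ≤ φ₁ a' := hφ₁mono ha ha' haa
    have e3 : G₁ a' (c a b) ≤ G₁ a' (c a' b') := hG₁anti a' ha' hc2 hc1 hle
    have e4 : φ₁ (c a' b') ≤ φ₁ (c a b) := hφ₁mono hc2 hc1 hle
    have e5 : 2 * (φ₁ (c a' b') - φ₁ a') / δx ≤ 2 * (φ₁ (c a b) - φ₁ a) / δx :=
      div_le_div_of_nonneg_right (by linarith) hδx.le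
    linarith
  obtain ⟨p, hp1, hp2⟩ := hcon1
  obtain ⟨q, hq1, hq2⟩ := hcon2
  have l1 : p < q := graph_lt' hπ₁mono hc1 hc2 hstep2 hp1 hq1
  have l2 : q < p := graph_lt' hπ₂mono hd2 hd1 hstep1 hq2 hp2
  linarith

private lemma flux_mono'
    (π₁ π₂ φ₁ φ₂ : ℝ → ℝ) (G₁ G₂ : ℝ → ℝ → ℝ) (δx : ℝ) (hδx : 0 < δx)
    (hπ₁mono : StrictMonoOn π₁ (Icc 0 1)) (hπ₂mono : StrictMonoOn π₂ (Icc 0 1))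
    (hφ₁mono : MonotoneOn φ₁ (Icc 0 1)) (hφ₂mono : MonotoneOn φ₂ (Icc 0 1))
    (hG₁mono : ∀ b ∈ Icc (0:ℝ) 1, MonotoneOn (fun a => G₁ a b) (Icc 0 1))
    (hG₁anti : ∀ a ∈ Icc (0:ℝ) 1, AntitoneOn (fun b => G₁ a b) (Icc 0 1))
    (hG₂mono : ∀ b ∈ Icc (0:ℝ) 1, MonotoneOn (fun a => G₂ a b) (Icc 0 1))
    (hG₂anti : ∀ a ∈ Icc (0:ℝ) 1, AntitoneOn (fun b => G₂ a b) (Icc 0 1))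
    (c d : ℝ → ℝ → ℝ)
    (hcd : ∀ a ∈ Icc (0:ℝ) 1, ∀ b ∈ Icc (0:ℝ) 1,
      c a b ∈ Icc (0:ℝ) 1 ∧ d a b ∈ Icc (0:ℝ) 1 ∧
        G₁ a (c a b) - 2 * (φ₁ (c a b) - φ₁ a) / δx
          = G₂ (d a b) b - 2 * (φ₂ b - φ₂ (d a b)) / δx ∧
        Connects π₁ π₂ (c a b) (d a b))
    (N : ℤ) (ub uB : ℝ) (A B : ℤ → ℝ) (j : ℤ) (hj1 : -N < j) (hj2 : j < N)
    (hAj1 : A (j-1) ∈ Icc (0:ℝ) 1) (hAj : A j ∈ Icc (0:ℝ) 1)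
    (hBj1 : B (j-1) ∈ Icc (0:ℝ) 1) (hBj : B j ∈ Icc (0:ℝ) 1)
    (h1 : A (j-1) ≤ B (j-1)) (h2 : B j ≤ A j) :
    numFlux G₁ G₂ φ₁ φ₂ c δx N ub uB A j ≤ numFlux G₁ G₂ φ₁ φ₂ c δx N ub uB B j := by
  have hjN : j ≠ -N := by omega
  have hjN' : j ≠ N := by omega
  unfold numFlux
  rw [if_neg hjN, if_neg hjN', if_neg hjN, if_neg hjN']
  by_cases hj0 : j < 0
  · rw [if_pos hj0, if_pos hj0]
    have g1 : G₁ (A (j-1)) (A j) ≤ G₁ (B (j-1)) (A j) := hG₁mono (A j) hAj hAj1 hBj1 h1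
    have g2 : G₁ (B (j-1)) (A j) ≤ G₁ (B (j-1)) (B j) := hG₁anti (B (j-1)) hBj1 hBj hAj h2
    have f1 : φ₁ (B j) ≤ φ₁ (A j) := hφ₁mono hBj hAj h2
    have f2 : φ₁ (A (j-1)) ≤ φ₁ (B (j-1)) := hφ₁mono hAj1 hBj1 h1
    have hdiv : (φ₁ (B j) - φ₁ (B (j-1))) / δx ≤ (φ₁ (A j) - φ₁ (A (j-1))) / δx :=
      div_le_div_of_nonneg_right (by linarith) hδx.le
    linarith
  · rw [if_neg hj0, if_neg hj0]
    by_cases hj00 : j = 0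
    · rw [if_pos hj00, if_pos hj00]
      subst hj00
      have e1 : A (-1) = A (0-1) := by norm_num
      have e2 : B (-1) = B (0-1) := by norm_num
      rw [e1, e2]
      exact interface_mono' π₁ π₂ φ₁ φ₂ G₁ G₂ δx hδx hπ₁mono hπ₂mono hφ₁mono hφ₂mono
        hG₁mono hG₁anti hG₂mono hG₂anti c d hcd hAj1 hBj1 hAj hBj h1 h2
    · rw [if_neg hj00, if_neg hj00]
      have g1 : G₂ (A (j-1)) (A j) ≤ G₂ (B (j-1)) (A j) := hG₂mono (A j) hAj hAj1 hBj1 h1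
      have g2 : G₂ (B (j-1)) (A j) ≤ G₂ (B (j-1)) (B j) := hG₂anti (B (j-1)) hBj1 hBj hAj h2
      have f1 : φ₂ (B j) ≤ φ₂ (A j) := hφ₂mono hBj hAj h2
      have f2 : φ₂ (A (j-1)) ≤ φ₂ (B (j-1)) := hφ₂mono hAj1 hBj1 h1
      have hdiv : (φ₂ (B j) - φ₂ (B (j-1))) / δx ≤ (φ₂ (A j) - φ₂ (A (j-1))) / δx :=
        div_le_div_of_nonneg_right (by linarith) hδx.le
      linarith


private lemma one_step'
    (π₁ π₂ φ₁ φ₂ : ℝ → ℝ) (G₁ G₂ : ℝ → ℝ → ℝ) (δx δt ϕ₁ ϕ₂ : ℝ)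
    (hδx : 0 < δx) (hδt : 0 < δt) (hϕ₁ : 0 < ϕ₁) (hϕ₂ : 0 < ϕ₂)
    (hπ₁mono : StrictMonoOn π₁ (Icc 0 1)) (hπ₂mono : StrictMonoOn π₂ (Icc 0 1))
    (hφ₁mono : MonotoneOn φ₁ (Icc 0 1)) (hφ₂mono : MonotoneOn φ₂ (Icc 0 1))
    (hG₁mono : ∀ b ∈ Icc (0:ℝ) 1, MonotoneOn (fun a => G₁ a b) (Icc 0 1))
    (hG₁anti : ∀ a ∈ Icc (0:ℝ) 1, AntitoneOn (fun b => G₁ a b) (Icc 0 1))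
    (hG₂mono : ∀ b ∈ Icc (0:ℝ) 1, MonotoneOn (fun a => G₂ a b) (Icc 0 1))
    (hG₂anti : ∀ a ∈ Icc (0:ℝ) 1, AntitoneOn (fun b => G₂ a b) (Icc 0 1))
    (c d : ℝ → ℝ → ℝ)
    (hcd : ∀ a ∈ Icc (0:ℝ) 1, ∀ b ∈ Icc (0:ℝ) 1,
      c a b ∈ Icc (0:ℝ) 1 ∧ d a b ∈ Icc (0:ℝ) 1 ∧
        G₁ a (c a b) - 2 * (φ₁ (c a b) - φ₁ a) / δx
          = G₂ (d a b) b - 2 * (φ₂ b - φ₂ (d a b)) / δx ∧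
        Connects π₁ π₂ (c a b) (d a b))
    (N : ℤ) (hN : 1 ≤ N) (ubar ubbar : ℕ → ℝ) (n : ℕ)
    (hub : ubar (n+1) ∈ Icc (0:ℝ) 1) (huB : ubbar (n+1) ∈ Icc (0:ℝ) 1)
    (u v : ℕ → ℤ → ℝ)
    (hru : ∀ j ∈ Finset.Icc (-N) (N-1), u (n+1) j ∈ Icc (0:ℝ) 1)
    (hrv : ∀ j ∈ Finset.Icc (-N) (N-1), v (n+1) j ∈ Icc (0:ℝ) 1)
    (hcomp : ∀ j ∈ Finset.Icc (-N) (N-1),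
      schemeLHS G₁ G₂ φ₁ φ₂ c ϕ₁ ϕ₂ δx δt N ubar ubbar u n j
        ≤ schemeLHS G₁ G₂ φ₁ φ₂ c ϕ₁ ϕ₂ δx δt N ubar ubbar v n j) :
    ∑ j ∈ Finset.Icc (-N) (N-1), phiCoef ϕ₁ ϕ₂ j * max (u (n+1) j - v (n+1) j) 0 * δx
      ≤ ∑ j ∈ Finset.Icc (-N) (N-1), phiCoef ϕ₁ ϕ₂ j * max (u n j - v n j) 0 * δx := by
  have hϕpos : ∀ j : ℤ, 0 < phiCoef ϕ₁ ϕ₂ j := fun j => by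
    unfold phiCoef; split
    · exact hϕ₁
    · exact hϕ₂
  have key : ∀ j ∈ Finset.Icc (-N) (N-1),
      phiCoef ϕ₁ ϕ₂ j * max (u (n+1) j - v (n+1) j) 0 * δx
        ≤ phiCoef ϕ₁ ϕ₂ j * max (u n j - v n j) 0 * δx
          + δt * ((if v (n+1) j < u (n+1) j then (1:ℝ) else 0) *
            ((numFlux G₁ G₂ φ₁ φ₂ c δx N (ubar (n+1)) (ubbar (n+1)) (u (n+1)) j - numFlux G₁ G₂ φ₁ φ₂ c δx N (ubar (n+1)) (ubbar (n+1)) (v (n+1)) j)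
              - (numFlux G₁ G₂ φ₁ φ₂ c δx N (ubar (n+1)) (ubbar (n+1)) (u (n+1)) (j+1) - numFlux G₁ G₂ φ₁ φ₂ c δx N (ubar (n+1)) (ubbar (n+1)) (v (n+1)) (j+1)))) := by
    intro j hj
    have h0 := hcomp j hj
    unfold schemeLHS at h0
    have h0' := mul_le_mul_of_nonneg_right h0 hδt.le
    have e : ∀ X A B : ℝ, (X / δt + A - B) * δt = X + A * δt - B * δt := fun X A B => by
      field_simp
    rw [e, e] at h0'
    have hϕj := hϕpos j
    by_cases hlt : v (n+1) j < u (n+1) j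
    · rw [if_pos hlt, one_mul,
        max_eq_left (by linarith : (0:ℝ) ≤ u (n+1) j - v (n+1) j)]
      have hm : phiCoef ϕ₁ ϕ₂ j * (u n j - v n j) * δx
          ≤ phiCoef ϕ₁ ϕ₂ j * max (u n j - v n j) 0 * δx :=
        mul_le_mul_of_nonneg_right
          (mul_le_mul_of_nonneg_left (le_max_left _ _) hϕj.le) hδx.le
      linarith
    · rw [if_neg hlt, zero_mul, mul_zero, add_zero,
        max_eq_right (by linarith [le_of_not_gt hlt] : u (n+1) j - v (n+1) j ≤ (0:ℝ))]
      have hnn : 0 ≤ phiCoef ϕ₁ ϕ₂ j * max (u n j - v n j) 0 * δx :=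
        mul_nonneg (mul_nonneg hϕj.le (le_max_right _ _)) hδx.le
      simpa using hnn
  have t1 : (if v (n+1) (-N) < u (n+1) (-N) then (1:ℝ) else 0) *
      (numFlux G₁ G₂ φ₁ φ₂ c δx N (ubar (n+1)) (ubbar (n+1)) (u (n+1)) (-N) - numFlux G₁ G₂ φ₁ φ₂ c δx N (ubar (n+1)) (ubbar (n+1)) (v (n+1)) (-N)) ≤ 0 := by
    by_cases h : v (n+1) (-N) < u (n+1) (-N)
    · rw [if_pos h, one_mul]
      have e : ∀ w : ℤ → ℝ,
          numFlux G₁ G₂ φ₁ φ₂ c δx N (ubar (n+1)) (ubbar (n+1)) w (-N)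
            = G₁ (ubar (n+1)) (w (-N)) := fun w => by unfold numFlux; rw [if_pos rfl]
      rw [e, e]
      have hmem : -N ∈ Finset.Icc (-N) (N-1) := by rw [Finset.mem_Icc]; omega
      have := hG₁anti (ubar (n+1)) hub (hrv (-N) hmem) (hru (-N) hmem) h.le
      linarith
    · rw [if_neg h, zero_mul]
  have t2 : 0 ≤ (if v (n+1) (N-1) < u (n+1) (N-1) then (1:ℝ) else 0) *
      (numFlux G₁ G₂ φ₁ φ₂ c δx N (ubar (n+1)) (ubbar (n+1)) (u (n+1)) (N-1+1) - numFlux G₁ G₂ φ₁ φ₂ c δx N (ubar (n+1)) (ubbar (n+1)) (v (n+1)) (N-1+1)) := by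
    by_cases h : v (n+1) (N-1) < u (n+1) (N-1)
    · rw [if_pos h, one_mul]
      have hN1 : N - 1 + 1 = N := by ring
      rw [hN1]
      have e : ∀ w : ℤ → ℝ,
          numFlux G₁ G₂ φ₁ φ₂ c δx N (ubar (n+1)) (ubbar (n+1)) w N
            = G₂ (w (N-1)) (ubbar (n+1)) := fun w => by
        unfold numFlux; rw [if_neg (by omega), if_pos rfl]
      rw [e, e]
      have hmem : N - 1 ∈ Finset.Icc (-N) (N-1) := by rw [Finset.mem_Icc]; omega
      have := hG₂mono (ubbar (n+1)) huB (hrv (N-1) hmem) (hru (N-1) hmem) h.le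
      linarith
    · rw [if_neg h, zero_mul]
  have t3 : ∀ j : ℤ, -N + 1 ≤ j → j ≤ N - 1 →
      ((if v (n+1) j < u (n+1) j then (1:ℝ) else 0)
        - (if v (n+1) (j-1) < u (n+1) (j-1) then (1:ℝ) else 0)) *
        (numFlux G₁ G₂ φ₁ φ₂ c δx N (ubar (n+1)) (ubbar (n+1)) (u (n+1)) j - numFlux G₁ G₂ φ₁ φ₂ c δx N (ubar (n+1)) (ubbar (n+1)) (v (n+1)) j) ≤ 0 := by
    intro j hja hjb
    have hmem1 : j ∈ Finset.Icc (-N) (N-1) := by rw [Finset.mem_Icc]; omega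
    have hmem2 : j - 1 ∈ Finset.Icc (-N) (N-1) := by rw [Finset.mem_Icc]; omega
    by_cases h1 : v (n+1) j < u (n+1) j <;> by_cases h2 : v (n+1) (j-1) < u (n+1) (j-1)
    · rw [if_pos h1, if_pos h2, sub_self, zero_mul]
    · rw [if_pos h1, if_neg h2, sub_zero, one_mul]
      have := flux_mono' π₁ π₂ φ₁ φ₂ G₁ G₂ δx hδx hπ₁mono hπ₂mono hφ₁mono hφ₂mono
        hG₁mono hG₁anti hG₂mono hG₂anti c d hcd N (ubar (n+1)) (ubbar (n+1))
        (u (n+1)) (v (n+1)) j (by omega) (by omega)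
        (hru _ hmem2) (hru _ hmem1) (hrv _ hmem2) (hrv _ hmem1)
        (le_of_not_gt h2) h1.le
      linarith
    · rw [if_neg h1, if_pos h2, zero_sub]
      have := flux_mono' π₁ π₂ φ₁ φ₂ G₁ G₂ δx hδx hπ₁mono hπ₂mono hφ₁mono hφ₂mono
        hG₁mono hG₁anti hG₂mono hG₂anti c d hcd N (ubar (n+1)) (ubbar (n+1))
        (v (n+1)) (u (n+1)) j (by omega) (by omega)
        (hrv _ hmem2) (hrv _ hmem1) (hru _ hmem2) (hru _ hmem1)
        h2.le (le_of_not_gt h1)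
      nlinarith
    · rw [if_neg h1, if_neg h2, sub_self, zero_mul]
  have hT : (∑ j ∈ Finset.Icc (-N) (N-1),
      (if v (n+1) j < u (n+1) j then (1:ℝ) else 0) *
        ((numFlux G₁ G₂ φ₁ φ₂ c δx N (ubar (n+1)) (ubbar (n+1)) (u (n+1)) j - numFlux G₁ G₂ φ₁ φ₂ c δx N (ubar (n+1)) (ubbar (n+1)) (v (n+1)) j)
          - (numFlux G₁ G₂ φ₁ φ₂ c δx N (ubar (n+1)) (ubbar (n+1)) (u (n+1)) (j+1) - numFlux G₁ G₂ φ₁ φ₂ c δx N (ubar (n+1)) (ubbar (n+1)) (v (n+1)) (j+1)))) ≤ 0 := by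
    exact abel_nonpos' (fun j => if v (n+1) j < u (n+1) j then (1:ℝ) else 0)
      (fun j => numFlux G₁ G₂ φ₁ φ₂ c δx N (ubar (n+1)) (ubbar (n+1)) (u (n+1)) j - numFlux G₁ G₂ φ₁ φ₂ c δx N (ubar (n+1)) (ubbar (n+1)) (v (n+1)) j) (-N) (N-1) (by omega) t1 t2 t3
  have hs := Finset.sum_le_sum key
  rw [Finset.sum_add_distrib, ← Finset.mul_sum] at hs
  have hTT : δt * (∑ j ∈ Finset.Icc (-N) (N-1),
      (if v (n+1) j < u (n+1) j then (1:ℝ) else 0) *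
        ((numFlux G₁ G₂ φ₁ φ₂ c δx N (ubar (n+1)) (ubbar (n+1)) (u (n+1)) j - numFlux G₁ G₂ φ₁ φ₂ c δx N (ubar (n+1)) (ubbar (n+1)) (v (n+1)) j)
          - (numFlux G₁ G₂ φ₁ φ₂ c δx N (ubar (n+1)) (ubbar (n+1)) (u (n+1)) (j+1) - numFlux G₁ G₂ φ₁ φ₂ c δx N (ubar (n+1)) (ubbar (n+1)) (v (n+1)) (j+1)))) ≤ 0 :=
    mul_nonpos_of_nonneg_of_nonpos hδt.le hT
  linarith

/-- Discrete comparison principle: a discrete solution is compared with any discrete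
supersolution (positive parts) and with any discrete subsolution (negative parts). -/
theorem stmt3
    (T : ℝ) (hT : 0 < T) (N M : ℕ) (hN : 0 < N) (hM : 0 < M)
    (δx δt : ℝ) (hδxdef : δx = 1 / (N : ℝ)) (hδtdef : δt = T / (M : ℝ))
    (ϕ₁ ϕ₂ : ℝ) (hϕ₁ : ϕ₁ ∈ Ioo (0:ℝ) 1) (hϕ₂ : ϕ₂ ∈ Ioo (0:ℝ) 1)
    (π₁ π₂ φ₁ φ₂ : ℝ → ℝ) (G₁ G₂ : ℝ → ℝ → ℝ)
    (hπ₁mono : StrictMonoOn π₁ (Icc 0 1)) (hπ₁lip : ∃ K, LipschitzOnWith K π₁ (Icc 0 1))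
    (hπ₂mono : StrictMonoOn π₂ (Icc 0 1)) (hπ₂lip : ∃ K, LipschitzOnWith K π₂ (Icc 0 1))
    (hφ₁mono : StrictMonoOn φ₁ (Icc 0 1)) (hφ₁lip : ∃ K, LipschitzOnWith K φ₁ (Icc 0 1))
    (hφ₁zero : φ₁ 0 = 0)
    (hφ₂mono : StrictMonoOn φ₂ (Icc 0 1)) (hφ₂lip : ∃ K, LipschitzOnWith K φ₂ (Icc 0 1))
    (hφ₂zero : φ₂ 0 = 0)
    (hG₁lip : ∃ K, LipschitzOnWith K (fun p : ℝ × ℝ => G₁ p.1 p.2) (Icc 0 1 ×ˢ Icc 0 1))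
    (hG₁mono : ∀ b ∈ Icc (0:ℝ) 1, MonotoneOn (fun a => G₁ a b) (Icc 0 1))
    (hG₁anti : ∀ a ∈ Icc (0:ℝ) 1, AntitoneOn (fun b => G₁ a b) (Icc 0 1))
    (hG₂lip : ∃ K, LipschitzOnWith K (fun p : ℝ × ℝ => G₂ p.1 p.2) (Icc 0 1 ×ˢ Icc 0 1))
    (hG₂mono : ∀ b ∈ Icc (0:ℝ) 1, MonotoneOn (fun a => G₂ a b) (Icc 0 1))
    (hG₂anti : ∀ a ∈ Icc (0:ℝ) 1, AntitoneOn (fun b => G₂ a b) (Icc 0 1))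
    (c d : ℝ → ℝ → ℝ)
    (hcd : ∀ a ∈ Icc (0:ℝ) 1, ∀ b ∈ Icc (0:ℝ) 1,
      (c a b ∈ Icc (0:ℝ) 1 ∧ d a b ∈ Icc (0:ℝ) 1 ∧
        G₁ a (c a b) - 2 * (φ₁ (c a b) - φ₁ a) / δx
          = G₂ (d a b) b - 2 * (φ₂ b - φ₂ (d a b)) / δx ∧
        Connects π₁ π₂ (c a b) (d a b)) ∧
      ∀ c' d' : ℝ, c' ∈ Icc (0:ℝ) 1 → d' ∈ Icc (0:ℝ) 1 →
        G₁ a c' - 2 * (φ₁ c' - φ₁ a) / δx = G₂ d' b - 2 * (φ₂ b - φ₂ d') / δx →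
        Connects π₁ π₂ c' d' → c' = c a b ∧ d' = d a b)
    (ubar ubbar : ℕ → ℝ)
    (hubar : ∀ n, 1 ≤ n → n ≤ M → ubar n ∈ Icc (0:ℝ) 1)
    (hubbar : ∀ n, 1 ≤ n → n ≤ M → ubbar n ∈ Icc (0:ℝ) 1)
    (u v : ℕ → ℤ → ℝ)
    (hu : IsDiscreteSolution G₁ G₂ φ₁ φ₂ c ϕ₁ ϕ₂ δx δt (N : ℤ) M ubar ubbar u) :
    (IsDiscreteSupersolution G₁ G₂ φ₁ φ₂ c ϕ₁ ϕ₂ δx δt (N : ℤ) M ubar ubbar v →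
      ∀ n ≤ M,
        ∑ j ∈ Finset.Icc (-(N : ℤ)) ((N : ℤ) - 1),
            phiCoef ϕ₁ ϕ₂ j * max (u n j - v n j) 0 * δx
          ≤ ∑ j ∈ Finset.Icc (-(N : ℤ)) ((N : ℤ) - 1),
              phiCoef ϕ₁ ϕ₂ j * max (u 0 j - v 0 j) 0 * δx) ∧
    (IsDiscreteSubsolution G₁ G₂ φ₁ φ₂ c ϕ₁ ϕ₂ δx δt (N : ℤ) M ubar ubbar v →
      ∀ n ≤ M,
        ∑ j ∈ Finset.Icc (-(N : ℤ)) ((N : ℤ) - 1),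
            phiCoef ϕ₁ ϕ₂ j * max (-(u n j - v n j)) 0 * δx
          ≤ ∑ j ∈ Finset.Icc (-(N : ℤ)) ((N : ℤ) - 1),
              phiCoef ϕ₁ ϕ₂ j * max (-(u 0 j - v 0 j)) 0 * δx) := by
  have hNR : (0:ℝ) < (N:ℝ) := by exact_mod_cast hN
  have hMR : (0:ℝ) < (M:ℝ) := by exact_mod_cast hM
  have hδx : 0 < δx := by rw [hδxdef]; positivity
  have hδt : 0 < δt := by rw [hδtdef]; positivity
  have hNZ : 1 ≤ (N:ℤ) := by exact_mod_cast hN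
  have hcd' : ∀ a ∈ Icc (0:ℝ) 1, ∀ b ∈ Icc (0:ℝ) 1,
      c a b ∈ Icc (0:ℝ) 1 ∧ d a b ∈ Icc (0:ℝ) 1 ∧
        G₁ a (c a b) - 2 * (φ₁ (c a b) - φ₁ a) / δx
          = G₂ (d a b) b - 2 * (φ₂ b - φ₂ (d a b)) / δx ∧
        Connects π₁ π₂ (c a b) (d a b) := fun a ha b hb => (hcd a ha b hb).1
  constructor
  · intro hv n
    induction n with
    | zero => intro _; exact le_rfl
    | succ k ih =>
      intro hk
      have hkM : k ≤ M := by omega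
      have step := one_step' π₁ π₂ φ₁ φ₂ G₁ G₂ δx δt ϕ₁ ϕ₂ hδx hδt hϕ₁.1 hϕ₂.1
        hπ₁mono hπ₂mono hφ₁mono.monotoneOn hφ₂mono.monotoneOn
        hG₁mono hG₁anti hG₂mono hG₂anti c d hcd' (N:ℤ) hNZ ubar ubbar k
        (hubar (k+1) (by omega) hk) (hubbar (k+1) (by omega) hk) u v
        (hu.1 (k+1) hk) (hv.1 (k+1) hk)
        (fun j hj => by
          have h1 := hu.2 k (by omega) j hj
          have h2 := hv.2 k (by omega) j hj
          linarith)
      exact le_trans step (ih hkM)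
  · intro hv n
    induction n with
    | zero => intro _; exact le_rfl
    | succ k ih =>
      intro hk
      have hkM : k ≤ M := by omega
      have step := one_step' π₁ π₂ φ₁ φ₂ G₁ G₂ δx δt ϕ₁ ϕ₂ hδx hδt hϕ₁.1 hϕ₂.1
        hπ₁mono hπ₂mono hφ₁mono.monotoneOn hφ₂mono.monotoneOn
        hG₁mono hG₁anti hG₂mono hG₂anti c d hcd' (N:ℤ) hNZ ubar ubbar k
        (hubar (k+1) (by omega) hk) (hubbar (k+1) (by omega) hk) v u
        (hv.1 (k+1) hk) (hu.1 (k+1) hk)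
        (fun j hj => by
          have h1 := hu.2 k (by omega) j hj
          have h2 := hv.2 k (by omega) j hj
          linarith)
      simp only [neg_sub] at *
      exact le_trans step (ih hkM)
end
end

section
/- For every initial vector u^0=(u^0_{j+1/2})_{j=−N}^{N−1}∈[0,1]^{2N} and every boundary data ū^n,ū̄^n∈[0,1], there exists a unique discrete solution (u^n)_{n=0,…,M} with values in [0,1]^{2N} starting from u^0. Moreover, if v^0∈[0,1]^{2N} is another initial vector and (v^n) the corresponding discrete solution, then the L¹-contraction principle holds: for every n∈{0,…,M} and for both choices of sign ±, ∑_{j=−N}^{N−1} ϕ_{i(j)} (u^n_{j+1/2}−v^n_{j+1/2})^± δx ≤ ∑_{j=−N}^{N−1} ϕ_{i(j)} (u^0_{j+1/2}−v^0_{j+1/2})^± δx, where s⁺=max(s,0) and s⁻=max(−s,0). -/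
open Set

noncomputable section

instance : Fact ((0:ℝ) ≤ 1) := ⟨zero_le_one⟩

lemma tp_le {π : ℝ → ℝ} {x p : ℝ} (hx1 : x ≠ 1) (hp : p ∈ tildePi π x) : p ≤ π x := by
  by_cases h0 : x = 0
  · subst h0; simpa [tildePi] using hp
  · have : p = π x := by simpa [tildePi, h0, hx1] using hp
    exact this.le

lemma tp_ge {π : ℝ → ℝ} {x p : ℝ} (hx0 : x ≠ 0) (hp : p ∈ tildePi π x) : π x ≤ p := by
  by_cases h1 : x = 1
  · subst h1; simpa [tildePi] using hp
  · have : p = π x := by simpa [tildePi, hx0, h1] using hp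
    exact this.ge

lemma tp_lt {π : ℝ → ℝ} (hπ : StrictMonoOn π (Icc 0 1)) {x y p p' : ℝ}
    (hx : x ∈ Icc (0:ℝ) 1) (hy : y ∈ Icc (0:ℝ) 1) (hxy : x < y)
    (hp : p ∈ tildePi π x) (hp' : p' ∈ tildePi π y) : p < p' :=
  lt_of_le_of_lt (tp_le (ne_of_lt (lt_of_lt_of_le hxy hy.2)) hp)
    (lt_of_lt_of_le (hπ hx hy hxy) (tp_ge (ne_of_gt (lt_of_le_of_lt hx.1 hxy)) hp'))

lemma cd_comp (π₁ π₂ φ₁ φ₂ : ℝ → ℝ) (G₁ G₂ : ℝ → ℝ → ℝ) (δx : ℝ) (hδx : 0 < δx)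
    (hπ₁ : StrictMonoOn π₁ (Icc 0 1)) (hπ₂ : StrictMonoOn π₂ (Icc 0 1))
    (hφ₁ : StrictMonoOn φ₁ (Icc 0 1)) (hφ₂ : StrictMonoOn φ₂ (Icc 0 1))
    (hG₁mono : ∀ b ∈ Icc (0:ℝ) 1, MonotoneOn (fun a => G₁ a b) (Icc 0 1))
    (hG₁anti : ∀ a ∈ Icc (0:ℝ) 1, AntitoneOn (fun b => G₁ a b) (Icc 0 1))
    (hG₂mono : ∀ b ∈ Icc (0:ℝ) 1, MonotoneOn (fun a => G₂ a b) (Icc 0 1))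
    (hG₂anti : ∀ a ∈ Icc (0:ℝ) 1, AntitoneOn (fun b => G₂ a b) (Icc 0 1))
    {a a' b b' c₀ d₀ c₁ d₁ : ℝ}
    (ha : a ∈ Icc (0:ℝ) 1) (ha' : a' ∈ Icc (0:ℝ) 1) (hb : b ∈ Icc (0:ℝ) 1)
    (hb' : b' ∈ Icc (0:ℝ) 1)
    (hc₀ : c₀ ∈ Icc (0:ℝ) 1) (hd₀ : d₀ ∈ Icc (0:ℝ) 1) (hc₁ : c₁ ∈ Icc (0:ℝ) 1)
    (hd₁ : d₁ ∈ Icc (0:ℝ) 1)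
    (haa : a ≤ a') (hbb : b ≤ b')
    (e₀ : G₁ a c₀ - 2 * (φ₁ c₀ - φ₁ a) / δx = G₂ d₀ b - 2 * (φ₂ b - φ₂ d₀) / δx)
    (e₁ : G₁ a' c₁ - 2 * (φ₁ c₁ - φ₁ a') / δx = G₂ d₁ b' - 2 * (φ₂ b' - φ₂ d₁) / δx)
    (con₀ : Connects π₁ π₂ c₀ d₀) (con₁ : Connects π₁ π₂ c₁ d₁) :
    c₀ ≤ c₁ ∧ d₀ ≤ d₁ := by
  obtain ⟨p₀, hp₀₁, hp₀₂⟩ := con₀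
  obtain ⟨p₁, hp₁₁, hp₁₂⟩ := con₁
  have Ψ₁a : ∀ {x y cc : ℝ}, x ∈ Icc (0:ℝ) 1 → y ∈ Icc (0:ℝ) 1 → cc ∈ Icc (0:ℝ) 1 → x ≤ y →
      G₁ x cc - 2*(φ₁ cc - φ₁ x)/δx ≤ G₁ y cc - 2*(φ₁ cc - φ₁ y)/δx := by
    intro x y cc hx hy hcc hxy
    have h1 : G₁ x cc ≤ G₁ y cc := hG₁mono cc hcc hx hy hxy
    have h2 : 2*(φ₁ cc - φ₁ y)/δx ≤ 2*(φ₁ cc - φ₁ x)/δx := by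
      gcongr
      exact hφ₁.monotoneOn hx hy hxy
    linarith
  have Ψ₁c_le : ∀ {x cc cc' : ℝ}, x ∈ Icc (0:ℝ) 1 → cc ∈ Icc (0:ℝ) 1 → cc' ∈ Icc (0:ℝ) 1 →
      cc' ≤ cc →
      G₁ x cc - 2*(φ₁ cc - φ₁ x)/δx ≤ G₁ x cc' - 2*(φ₁ cc' - φ₁ x)/δx := by
    intro x cc cc' hx hcc hcc' hlt
    have h1 : G₁ x cc ≤ G₁ x cc' := hG₁anti x hx hcc' hcc hlt
    have h2 : 2*(φ₁ cc' - φ₁ x)/δx ≤ 2*(φ₁ cc - φ₁ x)/δx := by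
      gcongr
      exact hφ₁.monotoneOn hcc' hcc hlt
    linarith
  have Ψ₁c_lt : ∀ {x cc cc' : ℝ}, x ∈ Icc (0:ℝ) 1 → cc ∈ Icc (0:ℝ) 1 → cc' ∈ Icc (0:ℝ) 1 →
      cc' < cc →
      G₁ x cc - 2*(φ₁ cc - φ₁ x)/δx < G₁ x cc' - 2*(φ₁ cc' - φ₁ x)/δx := by
    intro x cc cc' hx hcc hcc' hlt
    have h1 : G₁ x cc ≤ G₁ x cc' := hG₁anti x hx hcc' hcc hlt.le
    have h2 : 2*(φ₁ cc' - φ₁ x)/δx < 2*(φ₁ cc - φ₁ x)/δx := by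
      gcongr
      exact hφ₁ hcc' hcc hlt
    linarith
  have Ψ₂d_le : ∀ {x y bb : ℝ}, x ∈ Icc (0:ℝ) 1 → y ∈ Icc (0:ℝ) 1 → bb ∈ Icc (0:ℝ) 1 → x ≤ y →
      G₂ x bb - 2*(φ₂ bb - φ₂ x)/δx ≤ G₂ y bb - 2*(φ₂ bb - φ₂ y)/δx := by
    intro x y bb hx hy hbb hxy
    have h1 : G₂ x bb ≤ G₂ y bb := hG₂mono bb hbb hx hy hxy
    have h2 : 2*(φ₂ bb - φ₂ y)/δx ≤ 2*(φ₂ bb - φ₂ x)/δx := by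
      gcongr
      exact hφ₂.monotoneOn hx hy hxy
    linarith
  have Ψ₂d_lt : ∀ {x y bb : ℝ}, x ∈ Icc (0:ℝ) 1 → y ∈ Icc (0:ℝ) 1 → bb ∈ Icc (0:ℝ) 1 → x < y →
      G₂ x bb - 2*(φ₂ bb - φ₂ x)/δx < G₂ y bb - 2*(φ₂ bb - φ₂ y)/δx := by
    intro x y bb hx hy hbb hxy
    have h1 : G₂ x bb ≤ G₂ y bb := hG₂mono bb hbb hx hy hxy.le
    have h2 : 2*(φ₂ bb - φ₂ y)/δx < 2*(φ₂ bb - φ₂ x)/δx := by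
      gcongr
      exact hφ₂ hx hy hxy
    linarith
  have Ψ₂b_le : ∀ {x bb bb' : ℝ}, x ∈ Icc (0:ℝ) 1 → bb ∈ Icc (0:ℝ) 1 → bb' ∈ Icc (0:ℝ) 1 →
      bb ≤ bb' →
      G₂ x bb' - 2*(φ₂ bb' - φ₂ x)/δx ≤ G₂ x bb - 2*(φ₂ bb - φ₂ x)/δx := by
    intro x bb bb' hx hbb hbb' hle
    have h1 : G₂ x bb' ≤ G₂ x bb := hG₂anti x hx hbb hbb' hle
    have h2 : 2*(φ₂ bb - φ₂ x)/δx ≤ 2*(φ₂ bb' - φ₂ x)/δx := by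
      gcongr
      exact hφ₂.monotoneOn hbb hbb' hle
    linarith
  constructor
  · by_contra hcon
    push_neg at hcon
    have hpp : p₁ < p₀ := tp_lt hπ₁ hc₁ hc₀ hcon hp₁₁ hp₀₁
    have hdd : d₁ ≤ d₀ := by
      by_contra h2
      push_neg at h2
      exact absurd (tp_lt hπ₂ hd₀ hd₁ h2 hp₀₂ hp₁₂) (by linarith)
    have A := Ψ₂d_le hd₁ hd₀ hb' hdd
    have B := Ψ₂b_le hd₀ hb hb' hbb
    have C := Ψ₁c_lt ha hc₀ hc₁ hcon
    have D := Ψ₁a ha ha' hc₁ haa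
    linarith
  · by_contra hcon
    push_neg at hcon
    have hpp : p₁ < p₀ := tp_lt hπ₂ hd₁ hd₀ hcon hp₁₂ hp₀₂
    have hcc : c₁ ≤ c₀ := by
      by_contra h2
      push_neg at h2
      exact absurd (tp_lt hπ₁ hc₀ hc₁ h2 hp₀₁ hp₁₁) (by linarith)
    have A := Ψ₁a ha ha' hc₁ haa
    have B := Ψ₁c_le ha hc₀ hc₁ hcc
    have C := Ψ₂b_le hd₀ hb hb' hbb
    have D := Ψ₂d_lt hd₁ hd₀ hb' hcon
    linarith

lemma sum_tele_aux (g : ℤ → ℝ) (a : ℤ) (k : ℕ) :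
    ∑ j ∈ Finset.Icc a (a - 1 + k), (g (j+1) - g j) = g (a + k) - g a := by
  induction k with
  | zero =>
    rw [Finset.Icc_eq_empty (by omega)]
    simp
  | succ n ih =>
    have hins : Finset.Icc a (a - 1 + ((n:ℤ)+1)) = insert (a + n) (Finset.Icc a (a - 1 + n)) := by
      ext x; simp only [Finset.mem_Icc, Finset.mem_insert]; omega
    have h1 : ((n+1 : ℕ) : ℤ) = (n:ℤ) + 1 := by push_cast; ring
    rw [h1, hins, Finset.sum_insert (by simp only [Finset.mem_Icc]; omega), ih]
    have h2 : a + ((n:ℤ) + 1) = (a + n) + 1 := by ring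
    rw [h2]
    ring

lemma sum_tele (g : ℤ → ℝ) (a b : ℤ) (h : a ≤ b + 1) :
    ∑ j ∈ Finset.Icc a b, (g (j+1) - g j) = g (b+1) - g a := by
  obtain ⟨k, hk⟩ : ∃ k : ℕ, b = a - 1 + k := ⟨(b - (a-1)).toNat, by omega⟩
  subst hk
  rw [sum_tele_aux g a k]
  have : a - 1 + (k:ℤ) + 1 = a + k := by ring
  rw [this]

def Hfun (G₁ G₂ : ℝ → ℝ → ℝ) (φ₁ φ₂ : ℝ → ℝ) (c : ℝ → ℝ → ℝ) (ϕ₁ ϕ₂ δx δt : ℝ) (N : ℤ)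
    (w0 : ℤ → ℝ) (ub uB : ℝ) (w : ℤ → ℝ) (j : ℤ) : ℝ :=
  phiCoef ϕ₁ ϕ₂ j * (w j - w0 j) * δx / δt
    + numFlux G₁ G₂ φ₁ φ₂ c δx N ub uB w (j + 1)
    - numFlux G₁ G₂ φ₁ φ₂ c δx N ub uB w j

set_option maxHeartbeats 3000000 in
/-- Existence and uniqueness of the discrete solution, together with the discrete
`L¹`-contraction principle between discrete solutions. -/
theorem stmt4
    (T : ℝ) (hT : 0 < T) (N M : ℕ) (hN : 0 < N) (hM : 0 < M)
    (δx δt : ℝ) (hδxdef : δx = 1 / (N : ℝ)) (hδtdef : δt = T / (M : ℝ))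
    (ϕ₁ ϕ₂ : ℝ) (hϕ₁ : ϕ₁ ∈ Ioo (0:ℝ) 1) (hϕ₂ : ϕ₂ ∈ Ioo (0:ℝ) 1)
    (π₁ π₂ φ₁ φ₂ : ℝ → ℝ) (G₁ G₂ : ℝ → ℝ → ℝ)
    (hπ₁mono : StrictMonoOn π₁ (Icc 0 1)) (hπ₁lip : ∃ K, LipschitzOnWith K π₁ (Icc 0 1))
    (hπ₂mono : StrictMonoOn π₂ (Icc 0 1)) (hπ₂lip : ∃ K, LipschitzOnWith K π₂ (Icc 0 1))
    (hφ₁mono : StrictMonoOn φ₁ (Icc 0 1)) (hφ₁lip : ∃ K, LipschitzOnWith K φ₁ (Icc 0 1))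
    (hφ₁zero : φ₁ 0 = 0)
    (hφ₂mono : StrictMonoOn φ₂ (Icc 0 1)) (hφ₂lip : ∃ K, LipschitzOnWith K φ₂ (Icc 0 1))
    (hφ₂zero : φ₂ 0 = 0)
    (hG₁lip : ∃ K, LipschitzOnWith K (fun p : ℝ × ℝ => G₁ p.1 p.2) (Icc 0 1 ×ˢ Icc 0 1))
    (hG₁mono : ∀ b ∈ Icc (0:ℝ) 1, MonotoneOn (fun a => G₁ a b) (Icc 0 1))
    (hG₁anti : ∀ a ∈ Icc (0:ℝ) 1, AntitoneOn (fun b => G₁ a b) (Icc 0 1))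
    (hG₂lip : ∃ K, LipschitzOnWith K (fun p : ℝ × ℝ => G₂ p.1 p.2) (Icc 0 1 ×ˢ Icc 0 1))
    (hG₂mono : ∀ b ∈ Icc (0:ℝ) 1, MonotoneOn (fun a => G₂ a b) (Icc 0 1))
    (hG₂anti : ∀ a ∈ Icc (0:ℝ) 1, AntitoneOn (fun b => G₂ a b) (Icc 0 1))
    (c d : ℝ → ℝ → ℝ)
    (hcd : ∀ a ∈ Icc (0:ℝ) 1, ∀ b ∈ Icc (0:ℝ) 1,
      (c a b ∈ Icc (0:ℝ) 1 ∧ d a b ∈ Icc (0:ℝ) 1 ∧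
        G₁ a (c a b) - 2 * (φ₁ (c a b) - φ₁ a) / δx
          = G₂ (d a b) b - 2 * (φ₂ b - φ₂ (d a b)) / δx ∧
        Connects π₁ π₂ (c a b) (d a b)) ∧
      ∀ c' d' : ℝ, c' ∈ Icc (0:ℝ) 1 → d' ∈ Icc (0:ℝ) 1 →
        G₁ a c' - 2 * (φ₁ c' - φ₁ a) / δx = G₂ d' b - 2 * (φ₂ b - φ₂ d') / δx →
        Connects π₁ π₂ c' d' → c' = c a b ∧ d' = d a b)
    (ubar ubbar : ℕ → ℝ)
    (hubar : ∀ n, 1 ≤ n → n ≤ M → ubar n ∈ Icc (0:ℝ) 1)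
    (hubbar : ∀ n, 1 ≤ n → n ≤ M → ubbar n ∈ Icc (0:ℝ) 1)
    (f₁ f₂ : ℝ → ℝ) (q : ℝ)
    (hf₁lip : ∃ K, LipschitzOnWith K f₁ (Icc 0 1))
    (hf₂lip : ∃ K, LipschitzOnWith K f₂ (Icc 0 1))
    (hG₁diag : ∀ s ∈ Icc (0:ℝ) 1, G₁ s s = f₁ s)
    (hG₂diag : ∀ s ∈ Icc (0:ℝ) 1, G₂ s s = f₂ s)
    (hf₁0 : f₁ 0 = 0) (hf₂0 : f₂ 0 = 0) (hf₁1 : f₁ 1 = q) (hf₂1 : f₂ 1 = q)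
    (u0 v0 : ℤ → ℝ)
    (hu0 : ∀ j ∈ Finset.Icc (-(N : ℤ)) ((N : ℤ) - 1), u0 j ∈ Set.Icc (0:ℝ) 1)
    (hv0 : ∀ j ∈ Finset.Icc (-(N : ℤ)) ((N : ℤ) - 1), v0 j ∈ Set.Icc (0:ℝ) 1) :
    (∃ u : ℕ → ℤ → ℝ,
      IsDiscreteSolution G₁ G₂ φ₁ φ₂ c ϕ₁ ϕ₂ δx δt (N : ℤ) M ubar ubbar u ∧
      ∀ j ∈ Finset.Icc (-(N : ℤ)) ((N : ℤ) - 1), u 0 j = u0 j) ∧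
    (∀ u u' : ℕ → ℤ → ℝ,
      IsDiscreteSolution G₁ G₂ φ₁ φ₂ c ϕ₁ ϕ₂ δx δt (N : ℤ) M ubar ubbar u →
      (∀ j ∈ Finset.Icc (-(N : ℤ)) ((N : ℤ) - 1), u 0 j = u0 j) →
      IsDiscreteSolution G₁ G₂ φ₁ φ₂ c ϕ₁ ϕ₂ δx δt (N : ℤ) M ubar ubbar u' →
      (∀ j ∈ Finset.Icc (-(N : ℤ)) ((N : ℤ) - 1), u' 0 j = u0 j) →
      ∀ n ≤ M, ∀ j ∈ Finset.Icc (-(N : ℤ)) ((N : ℤ) - 1), u n j = u' n j) ∧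
    (∀ u v : ℕ → ℤ → ℝ,
      IsDiscreteSolution G₁ G₂ φ₁ φ₂ c ϕ₁ ϕ₂ δx δt (N : ℤ) M ubar ubbar u →
      (∀ j ∈ Finset.Icc (-(N : ℤ)) ((N : ℤ) - 1), u 0 j = u0 j) →
      IsDiscreteSolution G₁ G₂ φ₁ φ₂ c ϕ₁ ϕ₂ δx δt (N : ℤ) M ubar ubbar v →
      (∀ j ∈ Finset.Icc (-(N : ℤ)) ((N : ℤ) - 1), v 0 j = v0 j) →
      ∀ n ≤ M,
        (∑ j ∈ Finset.Icc (-(N : ℤ)) ((N : ℤ) - 1),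
            phiCoef ϕ₁ ϕ₂ j * max (u n j - v n j) 0 * δx
          ≤ ∑ j ∈ Finset.Icc (-(N : ℤ)) ((N : ℤ) - 1),
              phiCoef ϕ₁ ϕ₂ j * max (u0 j - v0 j) 0 * δx) ∧
        (∑ j ∈ Finset.Icc (-(N : ℤ)) ((N : ℤ) - 1),
            phiCoef ϕ₁ ϕ₂ j * max (-(u n j - v n j)) 0 * δx
          ≤ ∑ j ∈ Finset.Icc (-(N : ℤ)) ((N : ℤ) - 1),
              phiCoef ϕ₁ ϕ₂ j * max (-(u0 j - v0 j)) 0 * δx)) := by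
  classical
  have hN' : (0:ℝ) < N := by exact_mod_cast hN
  have hM' : (0:ℝ) < M := by exact_mod_cast hM
  have hδx : 0 < δx := by rw [hδxdef]; positivity
  have hδt : 0 < δt := by rw [hδtdef]; positivity
  have hNZ : (1:ℤ) ≤ (N:ℤ) := by exact_mod_cast hN
  have hϕ1 : 0 < ϕ₁ := hϕ₁.1
  have hϕ2 : 0 < ϕ₂ := hϕ₂.1
  have mem0 : (0:ℝ) ∈ Icc (0:ℝ) 1 := ⟨le_refl 0, zero_le_one⟩
  have mem1 : (1:ℝ) ∈ Icc (0:ℝ) 1 := ⟨zero_le_one, le_refl 1⟩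
  obtain ⟨K₁, hK₁⟩ := hG₁lip
  obtain ⟨K₂, hK₂⟩ := hG₂lip
  obtain ⟨Kφ₁, hKφ₁⟩ := hφ₁lip
  obtain ⟨Kφ₂, hKφ₂⟩ := hφ₂lip
  have G1lip : ∀ a b a' b' : ℝ, a ∈ Icc (0:ℝ) 1 → b ∈ Icc (0:ℝ) 1 → a' ∈ Icc (0:ℝ) 1 →
      b' ∈ Icc (0:ℝ) 1 → |G₁ a b - G₁ a' b'| ≤ (K₁:ℝ) * (|a - a'| + |b - b'|) := by
    intro a b a' b' ha hb ha' hb'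
    have h := hK₁.dist_le_mul (⟨a,b⟩ : ℝ × ℝ) ⟨ha, hb⟩ (⟨a',b'⟩ : ℝ × ℝ) ⟨ha', hb'⟩
    rw [Prod.dist_eq] at h
    simp only [Real.dist_eq] at h
    refine le_trans h ?_
    have : max |a - a'| |b - b'| ≤ |a - a'| + |b - b'| :=
      max_le (le_add_of_nonneg_right (abs_nonneg _)) (le_add_of_nonneg_left (abs_nonneg _))
    exact mul_le_mul_of_nonneg_left this K₁.coe_nonneg
  have G2lip : ∀ a b a' b' : ℝ, a ∈ Icc (0:ℝ) 1 → b ∈ Icc (0:ℝ) 1 → a' ∈ Icc (0:ℝ) 1 →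
      b' ∈ Icc (0:ℝ) 1 → |G₂ a b - G₂ a' b'| ≤ (K₂:ℝ) * (|a - a'| + |b - b'|) := by
    intro a b a' b' ha hb ha' hb'
    have h := hK₂.dist_le_mul (⟨a,b⟩ : ℝ × ℝ) ⟨ha, hb⟩ (⟨a',b'⟩ : ℝ × ℝ) ⟨ha', hb'⟩
    rw [Prod.dist_eq] at h
    simp only [Real.dist_eq] at h
    refine le_trans h ?_
    have : max |a - a'| |b - b'| ≤ |a - a'| + |b - b'| :=
      max_le (le_add_of_nonneg_right (abs_nonneg _)) (le_add_of_nonneg_left (abs_nonneg _))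
    exact mul_le_mul_of_nonneg_left this K₂.coe_nonneg
  have φ1lip : ∀ x y : ℝ, x ∈ Icc (0:ℝ) 1 → y ∈ Icc (0:ℝ) 1 → |φ₁ x - φ₁ y| ≤ (Kφ₁:ℝ) * |x - y| := by
    intro x y hx hy
    have h := hKφ₁.dist_le_mul x hx y hy
    simpa [Real.dist_eq] using h
  have φ2lip : ∀ x y : ℝ, x ∈ Icc (0:ℝ) 1 → y ∈ Icc (0:ℝ) 1 → |φ₂ x - φ₂ y| ≤ (Kφ₂:ℝ) * |x - y| := by
    intro x y hx hy
    have h := hKφ₂.dist_le_mul x hx y hy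
    simpa [Real.dist_eq] using h
  set CF : ℝ := (K₁:ℝ) + (K₂:ℝ) + (2*(Kφ₁:ℝ) + 2*(Kφ₂:ℝ))/δx with hCFdef
  have hCF : 0 ≤ CF := by rw [hCFdef]; positivity
  set grid := Finset.Icc (-(N:ℤ)) ((N:ℤ)-1) with hgrid
  set Ψ : ℝ → ℝ → ℝ := fun a b => G₁ a (c a b) - 2*(φ₁ (c a b) - φ₁ a)/δx with hΨ
  set NF := numFlux G₁ G₂ φ₁ φ₂ c δx (N:ℤ) with hNF
  set H := Hfun G₁ G₂ φ₁ φ₂ c ϕ₁ ϕ₂ δx δt (N:ℤ) with hH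
  have HS : ∀ (u : ℕ → ℤ → ℝ) (n : ℕ) (j : ℤ),
      schemeLHS G₁ G₂ φ₁ φ₂ c ϕ₁ ϕ₂ δx δt (N:ℤ) ubar ubbar u n j
        = H (u n) (ubar (n+1)) (ubbar (n+1)) (u (n+1)) j := fun _ _ _ => rfl
  have Hdef : ∀ (w0 : ℤ → ℝ) (ub uB : ℝ) (w : ℤ → ℝ) (j : ℤ),
      H w0 ub uB w j = phiCoef ϕ₁ ϕ₂ j * (w j - w0 j) * δx / δt
        + NF ub uB w (j+1) - NF ub uB w j := fun _ _ _ _ _ => rfl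
  have phipos : ∀ j : ℤ, 0 < phiCoef ϕ₁ ϕ₂ j := by
    intro j; unfold phiCoef; split_ifs
    · exact hϕ1
    · exact hϕ2
  have phile : ∀ j : ℤ, phiCoef ϕ₁ ϕ₂ j ≤ ϕ₁ + ϕ₂ := by
    intro j; unfold phiCoef; split_ifs
    · linarith
    · linarith
  -- properties of the interface solver
  have cdP : ∀ a ∈ Icc (0:ℝ) 1, ∀ b ∈ Icc (0:ℝ) 1,
      c a b ∈ Icc (0:ℝ) 1 ∧ d a b ∈ Icc (0:ℝ) 1 ∧
      (G₁ a (c a b) - 2*(φ₁ (c a b) - φ₁ a)/δx = G₂ (d a b) b - 2*(φ₂ b - φ₂ (d a b))/δx) ∧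
      Connects π₁ π₂ (c a b) (d a b) := fun a ha b hb => (hcd a ha b hb).1
  have cdmono : ∀ a a' b b' : ℝ, a ∈ Icc (0:ℝ) 1 → a' ∈ Icc (0:ℝ) 1 → b ∈ Icc (0:ℝ) 1 →
      b' ∈ Icc (0:ℝ) 1 → a ≤ a' → b ≤ b' → c a b ≤ c a' b' ∧ d a b ≤ d a' b' := by
    intro a a' b b' ha ha' hb hb' haa hbb
    obtain ⟨hc₀, hd₀, e₀, con₀⟩ := cdP a ha b hb
    obtain ⟨hc₁, hd₁, e₁, con₁⟩ := cdP a' ha' b' hb'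
    exact cd_comp π₁ π₂ φ₁ φ₂ G₁ G₂ δx hδx hπ₁mono hπ₂mono hφ₁mono hφ₂mono hG₁mono hG₁anti
      hG₂mono hG₂anti ha ha' hb hb' hc₀ hd₀ hc₁ hd₁ haa hbb e₀ e₁ con₀ con₁
  have Ψmono1 : ∀ a a' b : ℝ, a ∈ Icc (0:ℝ) 1 → a' ∈ Icc (0:ℝ) 1 → b ∈ Icc (0:ℝ) 1 →
      a ≤ a' → Ψ a b ≤ Ψ a' b := by
    intro a a' b ha ha' hb haa
    obtain ⟨hc₀, hd₀, e₀, -⟩ := cdP a ha b hb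
    obtain ⟨hc₁, hd₁, e₁, -⟩ := cdP a' ha' b hb
    obtain ⟨-, hdle⟩ := cdmono a a' b b ha ha' hb hb haa le_rfl
    have h1 : G₂ (d a b) b ≤ G₂ (d a' b) b := hG₂mono b hb hd₀ hd₁ hdle
    have h2 : 2*(φ₂ b - φ₂ (d a' b))/δx ≤ 2*(φ₂ b - φ₂ (d a b))/δx := by
      gcongr
      exact hφ₂mono.monotoneOn hd₀ hd₁ hdle
    simp only [hΨ]
    rw [e₀, e₁]
    linarith
  have Ψlip1 : ∀ a a' b : ℝ, a ∈ Icc (0:ℝ) 1 → a' ∈ Icc (0:ℝ) 1 → b ∈ Icc (0:ℝ) 1 →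
      a ≤ a' → Ψ a' b - Ψ a b ≤ CF * (a' - a) := by
    intro a a' b ha ha' hb haa
    obtain ⟨hc₀, hd₀, e₀, -⟩ := cdP a ha b hb
    obtain ⟨hc₁, hd₁, e₁, -⟩ := cdP a' ha' b hb
    obtain ⟨hcle, -⟩ := cdmono a a' b b ha ha' hb hb haa le_rfl
    have step1 : G₁ a' (c a' b) - 2*(φ₁ (c a' b) - φ₁ a')/δx
        ≤ G₁ a' (c a b) - 2*(φ₁ (c a b) - φ₁ a')/δx := by
      have h1 : G₁ a' (c a' b) ≤ G₁ a' (c a b) := hG₁anti a' ha' hc₀ hc₁ hcle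
      have h2 : 2*(φ₁ (c a b) - φ₁ a')/δx ≤ 2*(φ₁ (c a' b) - φ₁ a')/δx := by
        gcongr
        exact hφ₁mono.monotoneOn hc₀ hc₁ hcle
      linarith
    have hGd : G₁ a' (c a b) - G₁ a (c a b) ≤ (K₁:ℝ) * (a' - a) := by
      have h := G1lip a' (c a b) a (c a b) ha' hc₀ ha hc₀
      rw [sub_self, abs_zero, add_zero, abs_of_nonneg (by linarith : (0:ℝ) ≤ a' - a)] at h
      exact le_trans (le_abs_self _) h
    have hφd : φ₁ a' - φ₁ a ≤ (Kφ₁:ℝ) * (a' - a) := by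
      have h := φ1lip a' a ha' ha
      rw [abs_of_nonneg (by linarith : (0:ℝ) ≤ a' - a)] at h
      exact le_trans (le_abs_self _) h
    have hdiv : 2*(φ₁ a' - φ₁ a)/δx ≤ 2*((Kφ₁:ℝ) * (a' - a))/δx := by gcongr
    have hCFo : (K₁:ℝ) * (a' - a) + 2*((Kφ₁:ℝ) * (a' - a))/δx ≤ CF * (a' - a) := by
      rw [hCFdef]
      have h1 : 2*((Kφ₁:ℝ) * (a' - a))/δx = (2*(Kφ₁:ℝ)/δx) * (a' - a) := by ring
      have h2 : ((K₁:ℝ) + (K₂:ℝ) + (2*(Kφ₁:ℝ) + 2*(Kφ₂:ℝ))/δx) * (a' - a)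
          = (K₁:ℝ) * (a' - a) + ((K₂:ℝ) + 2*(Kφ₂:ℝ)/δx) * (a' - a) + (2*(Kφ₁:ℝ)/δx) * (a' - a) := by
        field_simp
        ring
      rw [h1, h2]
      have h3 : 0 ≤ ((K₂:ℝ) + 2*(Kφ₂:ℝ)/δx) * (a' - a) :=
        mul_nonneg (by positivity) (by linarith)
      linarith
    simp only [hΨ]
    have expand : G₁ a' (c a b) - 2*(φ₁ (c a b) - φ₁ a')/δx - (G₁ a (c a b) - 2*(φ₁ (c a b) - φ₁ a)/δx)
        = (G₁ a' (c a b) - G₁ a (c a b)) + 2*(φ₁ a' - φ₁ a)/δx := by ring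
    have final : G₁ a' (c a b) - 2*(φ₁ (c a b) - φ₁ a')/δx - (G₁ a (c a b) - 2*(φ₁ (c a b) - φ₁ a)/δx)
        ≤ CF * (a' - a) := by rw [expand]; linarith
    linarith [step1, final]
  have Ψanti2 : ∀ a b b' : ℝ, a ∈ Icc (0:ℝ) 1 → b ∈ Icc (0:ℝ) 1 → b' ∈ Icc (0:ℝ) 1 →
      b ≤ b' → Ψ a b' ≤ Ψ a b := by
    intro a b b' ha hb hb' hbb
    obtain ⟨hc₀, hd₀, e₀, -⟩ := cdP a ha b hb
    obtain ⟨hc₁, hd₁, e₁, -⟩ := cdP a ha b' hb'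
    obtain ⟨hcle, -⟩ := cdmono a a b b' ha ha hb hb' le_rfl hbb
    have h1 : G₁ a (c a b') ≤ G₁ a (c a b) := hG₁anti a ha hc₀ hc₁ hcle
    have h2 : 2*(φ₁ (c a b) - φ₁ a)/δx ≤ 2*(φ₁ (c a b') - φ₁ a)/δx := by
      gcongr
      exact hφ₁mono.monotoneOn hc₀ hc₁ hcle
    simp only [hΨ]
    linarith
  have Ψlip2 : ∀ a b b' : ℝ, a ∈ Icc (0:ℝ) 1 → b ∈ Icc (0:ℝ) 1 → b' ∈ Icc (0:ℝ) 1 →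
      b ≤ b' → Ψ a b - Ψ a b' ≤ CF * (b' - b) := by
    intro a b b' ha hb hb' hbb
    obtain ⟨hc₀, hd₀, e₀, -⟩ := cdP a ha b hb
    obtain ⟨hc₁, hd₁, e₁, -⟩ := cdP a ha b' hb'
    obtain ⟨-, hdle⟩ := cdmono a a b b' ha ha hb hb' le_rfl hbb
    have step1 : G₂ (d a b) b - 2*(φ₂ b - φ₂ (d a b))/δx
        ≤ G₂ (d a b') b - 2*(φ₂ b - φ₂ (d a b'))/δx := by
      have h1 : G₂ (d a b) b ≤ G₂ (d a b') b := hG₂mono b hb hd₀ hd₁ hdle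
      have h2 : 2*(φ₂ b - φ₂ (d a b'))/δx ≤ 2*(φ₂ b - φ₂ (d a b))/δx := by
        gcongr
        exact hφ₂mono.monotoneOn hd₀ hd₁ hdle
      linarith
    have hGd : G₂ (d a b') b - G₂ (d a b') b' ≤ (K₂:ℝ) * (b' - b) := by
      have h := G2lip (d a b') b (d a b') b' hd₁ hb hd₁ hb'
      rw [sub_self, abs_zero, zero_add, abs_of_nonpos (by linarith : b - b' ≤ 0)] at h
      refine le_trans (le_abs_self _) (le_trans h (by linarith))
    have hφd : φ₂ b' - φ₂ b ≤ (Kφ₂:ℝ) * (b' - b) := by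
      have h := φ2lip b' b hb' hb
      rw [abs_of_nonneg (by linarith : (0:ℝ) ≤ b' - b)] at h
      exact le_trans (le_abs_self _) h
    have hdiv : 2*(φ₂ b' - φ₂ b)/δx ≤ 2*((Kφ₂:ℝ) * (b' - b))/δx := by gcongr
    have hCFo : (K₂:ℝ) * (b' - b) + 2*((Kφ₂:ℝ) * (b' - b))/δx ≤ CF * (b' - b) := by
      rw [hCFdef]
      have h1 : 2*((Kφ₂:ℝ) * (b' - b))/δx = (2*(Kφ₂:ℝ)/δx) * (b' - b) := by ring
      have h2 : ((K₁:ℝ) + (K₂:ℝ) + (2*(Kφ₁:ℝ) + 2*(Kφ₂:ℝ))/δx) * (b' - b)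
          = (K₂:ℝ) * (b' - b) + ((K₁:ℝ) + 2*(Kφ₁:ℝ)/δx) * (b' - b) + (2*(Kφ₂:ℝ)/δx) * (b' - b) := by
        field_simp
        ring
      rw [h1, h2]
      have h3 : 0 ≤ ((K₁:ℝ) + 2*(Kφ₁:ℝ)/δx) * (b' - b) :=
        mul_nonneg (by positivity) (by linarith)
      linarith
    have expand : G₂ (d a b') b - 2*(φ₂ b - φ₂ (d a b'))/δx
          - (G₂ (d a b') b' - 2*(φ₂ b' - φ₂ (d a b'))/δx)
        = (G₂ (d a b') b - G₂ (d a b') b') + 2*(φ₂ b' - φ₂ b)/δx := by ring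
    simp only [hΨ]
    rw [e₀, e₁]
    linarith [step1, hGd, hdiv, hCFo, expand]
  have ΨlipA : ∀ s s' b : ℝ, s ∈ Icc (0:ℝ) 1 → s' ∈ Icc (0:ℝ) 1 → b ∈ Icc (0:ℝ) 1 →
      |Ψ s' b - Ψ s b| ≤ CF * |s' - s| := by
    intro s s' b hs hs' hb
    rcases le_total s s' with h | h
    · rw [abs_of_nonneg (by linarith : (0:ℝ) ≤ s' - s)]
      rw [abs_of_nonneg (by linarith [Ψmono1 s s' b hs hs' hb h])]
      exact Ψlip1 s s' b hs hs' hb h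
    · rw [abs_of_nonpos (by linarith : s' - s ≤ 0)]
      rw [abs_of_nonpos (by linarith [Ψmono1 s' s b hs' hs hb h])]
      have := Ψlip1 s' s b hs' hs hb h
      linarith
  have ΨlipB : ∀ a s s' : ℝ, a ∈ Icc (0:ℝ) 1 → s ∈ Icc (0:ℝ) 1 → s' ∈ Icc (0:ℝ) 1 →
      |Ψ a s' - Ψ a s| ≤ CF * |s' - s| := by
    intro a s s' ha hs hs'
    rcases le_total s s' with h | h
    · rw [abs_of_nonneg (by linarith : (0:ℝ) ≤ s' - s)]
      rw [abs_of_nonpos (by linarith [Ψanti2 a s s' ha hs hs' h])]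
      have := Ψlip2 a s s' ha hs hs' h
      linarith
    · rw [abs_of_nonpos (by linarith : s' - s ≤ 0)]
      rw [abs_of_nonneg (by linarith [Ψanti2 a s' s ha hs' hs h])]
      have := Ψlip2 a s' s ha hs' hs h
      linarith
  -- values of c, d at the corners
  have hcd00 : c 0 0 = 0 ∧ d 0 0 = 0 := by
    have heq : G₁ 0 0 - 2*(φ₁ 0 - φ₁ 0)/δx = G₂ 0 0 - 2*(φ₂ 0 - φ₂ 0)/δx := by
      rw [hG₁diag 0 mem0, hG₂diag 0 mem0, hf₁0, hf₂0]
      ring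
    have hcon : Connects π₁ π₂ 0 0 := by
      refine ⟨min (π₁ 0) (π₂ 0), ?_, ?_⟩
      · simp [tildePi]
      · simp [tildePi]
    have h := (hcd 0 mem0 0 mem0).2 0 0 mem0 mem0 heq hcon
    exact ⟨h.1.symm, h.2.symm⟩
  have hcd11 : c 1 1 = 1 ∧ d 1 1 = 1 := by
    have heq : G₁ 1 1 - 2*(φ₁ 1 - φ₁ 1)/δx = G₂ 1 1 - 2*(φ₂ 1 - φ₂ 1)/δx := by
      rw [hG₁diag 1 mem1, hG₂diag 1 mem1, hf₁1, hf₂1]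
      ring
    have hcon : Connects π₁ π₂ 1 1 := by
      refine ⟨max (π₁ 1) (π₂ 1), ?_, ?_⟩
      · simp [tildePi]
      · simp [tildePi]
    have h := (hcd 1 mem1 1 mem1).2 1 1 mem1 mem1 heq hcon
    exact ⟨h.1.symm, h.2.symm⟩
  -- unfolding lemmas for numFlux
  have NFbl : ∀ ub uB (v : ℤ → ℝ), NF ub uB v (-(N:ℤ)) = G₁ ub (v (-(N:ℤ))) := by
    intro ub uB v
    simp only [hNF]
    unfold numFlux
    rw [if_pos rfl]
  have NFbr : ∀ ub uB (v : ℤ → ℝ), NF ub uB v (N:ℤ) = G₂ (v ((N:ℤ)-1)) uB := by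
    intro ub uB v
    simp only [hNF]
    unfold numFlux
    rw [if_neg (by omega), if_pos rfl]
  have NFint1 : ∀ ub uB (v : ℤ → ℝ) (j : ℤ), -(N:ℤ) < j → j < 0 →
      NF ub uB v j = G₁ (v (j-1)) (v j) - (φ₁ (v j) - φ₁ (v (j-1)))/δx := by
    intro ub uB v j h1 h2
    simp only [hNF]
    unfold numFlux
    rw [if_neg (by omega), if_neg (by omega), if_pos h2]
  have NF0eq : ∀ ub uB (v : ℤ → ℝ), NF ub uB v 0 = Ψ (v (-1)) (v 0) := by
    intro ub uB v
    simp only [hNF, hΨ]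
    unfold numFlux
    rw [if_neg (by omega), if_neg (by omega), if_neg (by omega), if_pos rfl]
  have NFint2 : ∀ ub uB (v : ℤ → ℝ) (j : ℤ), 0 < j → j < (N:ℤ) →
      NF ub uB v j = G₂ (v (j-1)) (v j) - (φ₂ (v j) - φ₂ (v (j-1)))/δx := by
    intro ub uB v j h1 h2
    simp only [hNF]
    unfold numFlux
    rw [if_neg (by omega), if_neg (by omega), if_neg (by omega), if_neg (by omega)]
  have memg : ∀ j : ℤ, -(N:ℤ) ≤ j → j ≤ (N:ℤ)-1 → j ∈ grid := by
    intro j h1 h2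
    rw [hgrid]
    exact Finset.mem_Icc.mpr ⟨h1, h2⟩
  -- monotonicity of the flux
  have NFmono : ∀ ub uB : ℝ, ub ∈ Icc (0:ℝ) 1 → uB ∈ Icc (0:ℝ) 1 → ∀ v w : ℤ → ℝ,
      (∀ k ∈ grid, v k ∈ Icc (0:ℝ) 1) → (∀ k ∈ grid, w k ∈ Icc (0:ℝ) 1) →
      ∀ j : ℤ, -(N:ℤ) ≤ j → j ≤ (N:ℤ) → (j ≠ -(N:ℤ) → v (j-1) ≤ w (j-1)) →
      (j ≠ (N:ℤ) → w j ≤ v j) → NF ub uB v j ≤ NF ub uB w j := by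
    intro ub uB hub huB v w hv hw j hj1 hj2 hL hR
    rcases eq_or_lt_of_le hj1 with he | h1
    · subst he
      rw [NFbl, NFbl]
      have hm : -(N:ℤ) ∈ grid := memg _ le_rfl (by omega)
      exact hG₁anti ub hub (hw _ hm) (hv _ hm) (hR (by omega))
    rcases eq_or_lt_of_le hj2 with he | h2
    · subst he
      rw [NFbr, NFbr]
      have hm : (N:ℤ)-1 ∈ grid := memg _ (by omega) le_rfl
      exact hG₂mono uB huB (hv _ hm) (hw _ hm) (hL (by omega))
    rcases lt_trichotomy j 0 with hj0 | hj0 | hj0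
    · rw [NFint1 _ _ _ _ h1 hj0, NFint1 _ _ _ _ h1 hj0]
      have hm1 : j - 1 ∈ grid := memg _ (by omega) (by omega)
      have hm2 : j ∈ grid := memg _ (by omega) (by omega)
      have g1 : G₁ (v (j-1)) (v j) ≤ G₁ (w (j-1)) (v j) :=
        hG₁mono (v j) (hv _ hm2) (hv _ hm1) (hw _ hm1) (hL (by omega))
      have g2 : G₁ (w (j-1)) (v j) ≤ G₁ (w (j-1)) (w j) :=
        hG₁anti (w (j-1)) (hw _ hm1) (hw _ hm2) (hv _ hm2) (hR (by omega))
      have q : (φ₁ (w j) - φ₁ (w (j-1)))/δx ≤ (φ₁ (v j) - φ₁ (v (j-1)))/δx := by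
        gcongr
        · exact hφ₁mono.monotoneOn (hw _ hm2) (hv _ hm2) (hR (by omega))
        · exact hφ₁mono.monotoneOn (hv _ hm1) (hw _ hm1) (hL (by omega))
      linarith
    · subst hj0
      rw [NF0eq, NF0eq]
      have hm1 : (-1 : ℤ) ∈ grid := memg _ (by omega) (by omega)
      have hm2 : (0 : ℤ) ∈ grid := memg _ (by omega) (by omega)
      have s1 : Ψ (v (-1)) (v 0) ≤ Ψ (w (-1)) (v 0) :=
        Ψmono1 _ _ _ (hv _ hm1) (hw _ hm1) (hv _ hm2) (hL (by omega))
      have s2 : Ψ (w (-1)) (v 0) ≤ Ψ (w (-1)) (w 0) :=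
        Ψanti2 _ _ _ (hw _ hm1) (hw _ hm2) (hv _ hm2) (hR (by omega))
      linarith
    · rw [NFint2 _ _ _ _ hj0 h2, NFint2 _ _ _ _ hj0 h2]
      have hm1 : j - 1 ∈ grid := memg _ (by omega) (by omega)
      have hm2 : j ∈ grid := memg _ (by omega) (by omega)
      have g1 : G₂ (v (j-1)) (v j) ≤ G₂ (w (j-1)) (v j) :=
        hG₂mono (v j) (hv _ hm2) (hv _ hm1) (hw _ hm1) (hL (by omega))
      have g2 : G₂ (w (j-1)) (v j) ≤ G₂ (w (j-1)) (w j) :=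
        hG₂anti (w (j-1)) (hw _ hm1) (hw _ hm2) (hv _ hm2) (hR (by omega))
      have q : (φ₂ (w j) - φ₂ (w (j-1)))/δx ≤ (φ₂ (v j) - φ₂ (v (j-1)))/δx := by
        gcongr
        · exact hφ₂mono.monotoneOn (hw _ hm2) (hv _ hm2) (hR (by omega))
        · exact hφ₂mono.monotoneOn (hv _ hm1) (hw _ hm1) (hL (by omega))
      linarith
  -- update helpers
  have updE : ∀ (f : ℤ → ℝ) (k : ℤ) (s : ℝ), Function.update f k s k = s := by
    intro f k s; simp
  have updN : ∀ (f : ℤ → ℝ) (k : ℤ) (s : ℝ) (x : ℤ), x ≠ k → Function.update f k s x = f x := by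
    intro f k s x h; simp [Function.update_apply, h]
  have KleCF : (K₁:ℝ) ≤ CF ∧ (K₂:ℝ) ≤ CF := by
    have h0 : 0 ≤ (2*(Kφ₁:ℝ) + 2*(Kφ₂:ℝ))/δx := by positivity
    constructor <;> · rw [hCFdef]; linarith [K₁.coe_nonneg, K₂.coe_nonneg]
  -- Lipschitz bound for the flux in the left coordinate
  have NFlipL : ∀ ub uB : ℝ, ub ∈ Icc (0:ℝ) 1 → uB ∈ Icc (0:ℝ) 1 → ∀ v : ℤ → ℝ,
      (∀ k ∈ grid, v k ∈ Icc (0:ℝ) 1) → ∀ s s' : ℝ, s ∈ Icc (0:ℝ) 1 → s' ∈ Icc (0:ℝ) 1 →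
      ∀ j : ℤ, -(N:ℤ) ≤ j → j ≤ (N:ℤ) →
      |NF ub uB (Function.update v (j-1) s') j - NF ub uB (Function.update v (j-1) s) j|
        ≤ CF * |s' - s| := by
    intro ub uB hub huB v hv s s' hs hs' j hj1 hj2
    have habs : 0 ≤ CF * |s' - s| := mul_nonneg hCF (abs_nonneg _)
    have hcore1 : ∀ x : ℝ, x ∈ Icc (0:ℝ) 1 →
        |(G₁ s' x - (φ₁ x - φ₁ s')/δx) - (G₁ s x - (φ₁ x - φ₁ s)/δx)| ≤ CF * |s' - s| := by
      intro x hx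
      have hG := G1lip s' x s x hs' hx hs hx
      rw [sub_self, abs_zero, add_zero] at hG
      have hφ := φ1lip s' s hs' hs
      have e : (G₁ s' x - (φ₁ x - φ₁ s')/δx) - (G₁ s x - (φ₁ x - φ₁ s)/δx)
          = (G₁ s' x - G₁ s x) + (φ₁ s' - φ₁ s)/δx := by ring
      rw [e]
      refine le_trans (abs_add_le _ _) ?_
      rw [abs_div, abs_of_pos hδx]
      have h2 : |φ₁ s' - φ₁ s|/δx ≤ ((Kφ₁:ℝ) * |s' - s|)/δx := by gcongr
      have h3 : (K₁:ℝ)*|s' - s| + ((Kφ₁:ℝ) * |s' - s|)/δx ≤ CF * |s' - s| := by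
        rw [hCFdef]
        have e2 : ((K₁:ℝ) + (K₂:ℝ) + (2*(Kφ₁:ℝ) + 2*(Kφ₂:ℝ))/δx) * |s' - s|
            = (K₁:ℝ)*|s' - s| + ((Kφ₁:ℝ) * |s' - s|)/δx
              + ((K₂:ℝ) * |s' - s| + ((Kφ₁:ℝ) * |s' - s|)/δx + ((2*(Kφ₂:ℝ)) * |s' - s|)/δx) := by
          field_simp
          ring
        rw [e2]
        have h4 : 0 ≤ (K₂:ℝ) * |s' - s| + ((Kφ₁:ℝ) * |s' - s|)/δx + ((2*(Kφ₂:ℝ)) * |s' - s|)/δx := by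
          positivity
        linarith
      linarith
    have hcore2 : ∀ x : ℝ, x ∈ Icc (0:ℝ) 1 →
        |(G₂ s' x - (φ₂ x - φ₂ s')/δx) - (G₂ s x - (φ₂ x - φ₂ s)/δx)| ≤ CF * |s' - s| := by
      intro x hx
      have hG := G2lip s' x s x hs' hx hs hx
      rw [sub_self, abs_zero, add_zero] at hG
      have hφ := φ2lip s' s hs' hs
      have e : (G₂ s' x - (φ₂ x - φ₂ s')/δx) - (G₂ s x - (φ₂ x - φ₂ s)/δx)
          = (G₂ s' x - G₂ s x) + (φ₂ s' - φ₂ s)/δx := by ring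
      rw [e]
      refine le_trans (abs_add_le _ _) ?_
      rw [abs_div, abs_of_pos hδx]
      have h2 : |φ₂ s' - φ₂ s|/δx ≤ ((Kφ₂:ℝ) * |s' - s|)/δx := by gcongr
      have h3 : (K₂:ℝ)*|s' - s| + ((Kφ₂:ℝ) * |s' - s|)/δx ≤ CF * |s' - s| := by
        rw [hCFdef]
        have e2 : ((K₁:ℝ) + (K₂:ℝ) + (2*(Kφ₁:ℝ) + 2*(Kφ₂:ℝ))/δx) * |s' - s|
            = (K₂:ℝ)*|s' - s| + ((Kφ₂:ℝ) * |s' - s|)/δx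
              + ((K₁:ℝ) * |s' - s| + ((Kφ₂:ℝ) * |s' - s|)/δx + ((2*(Kφ₁:ℝ)) * |s' - s|)/δx) := by
          field_simp
          ring
        rw [e2]
        have h4 : 0 ≤ (K₁:ℝ) * |s' - s| + ((Kφ₂:ℝ) * |s' - s|)/δx + ((2*(Kφ₁:ℝ)) * |s' - s|)/δx := by
          positivity
        linarith
      linarith
    rcases eq_or_lt_of_le hj1 with he | h1
    · subst he
      rw [NFbl, NFbl, updN _ _ _ _ (by omega), updN _ _ _ _ (by omega), sub_self, abs_zero]
      exact habs
    rcases eq_or_lt_of_le hj2 with he | h2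
    · subst he
      rw [NFbr, NFbr, updE, updE]
      have h := G2lip s' uB s uB hs' huB hs huB
      rw [sub_self, abs_zero, add_zero] at h
      refine le_trans h (mul_le_mul_of_nonneg_right KleCF.2 (abs_nonneg _))
    rcases lt_trichotomy j 0 with hj0 | hj0 | hj0
    · rw [NFint1 _ _ _ _ h1 hj0, NFint1 _ _ _ _ h1 hj0, updE, updE,
        updN v (j-1) s' j (by omega), updN v (j-1) s j (by omega)]
      exact hcore1 (v j) (hv j (memg _ (by omega) (by omega)))
    · subst hj0
      have hco : (0:ℤ) - 1 = -1 := by norm_num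
      rw [NF0eq, NF0eq, hco, updE, updE, updN v (-1) s' 0 (by omega), updN v (-1) s 0 (by omega)]
      exact ΨlipA s s' (v 0) hs hs' (hv 0 (memg _ (by omega) (by omega)))
    · rw [NFint2 _ _ _ _ hj0 h2, NFint2 _ _ _ _ hj0 h2, updE, updE,
        updN v (j-1) s' j (by omega), updN v (j-1) s j (by omega)]
      exact hcore2 (v j) (hv j (memg _ (by omega) (by omega)))
  -- Lipschitz bound for the flux in the right coordinate
  have NFlipR : ∀ ub uB : ℝ, ub ∈ Icc (0:ℝ) 1 → uB ∈ Icc (0:ℝ) 1 → ∀ v : ℤ → ℝ,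
      (∀ k ∈ grid, v k ∈ Icc (0:ℝ) 1) → ∀ s s' : ℝ, s ∈ Icc (0:ℝ) 1 → s' ∈ Icc (0:ℝ) 1 →
      ∀ j : ℤ, -(N:ℤ) ≤ j → j ≤ (N:ℤ) →
      |NF ub uB (Function.update v j s') j - NF ub uB (Function.update v j s) j|
        ≤ CF * |s' - s| := by
    intro ub uB hub huB v hv s s' hs hs' j hj1 hj2
    have habs : 0 ≤ CF * |s' - s| := mul_nonneg hCF (abs_nonneg _)
    have hcore1 : ∀ x : ℝ, x ∈ Icc (0:ℝ) 1 →
        |(G₁ x s' - (φ₁ s' - φ₁ x)/δx) - (G₁ x s - (φ₁ s - φ₁ x)/δx)| ≤ CF * |s' - s| := by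
      intro x hx
      have hG := G1lip x s' x s hx hs' hx hs
      rw [sub_self, abs_zero, zero_add] at hG
      have hφ := φ1lip s' s hs' hs
      have e : (G₁ x s' - (φ₁ s' - φ₁ x)/δx) - (G₁ x s - (φ₁ s - φ₁ x)/δx)
          = (G₁ x s' - G₁ x s) + (φ₁ s - φ₁ s')/δx := by ring
      rw [e]
      refine le_trans (abs_add_le _ _) ?_
      rw [abs_div, abs_of_pos hδx]
      have h2 : |φ₁ s - φ₁ s'|/δx ≤ ((Kφ₁:ℝ) * |s' - s|)/δx := by
        gcongr
        rw [abs_sub_comm]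
        exact hφ
      have h3 : (K₁:ℝ)*|s' - s| + ((Kφ₁:ℝ) * |s' - s|)/δx ≤ CF * |s' - s| := by
        rw [hCFdef]
        have e2 : ((K₁:ℝ) + (K₂:ℝ) + (2*(Kφ₁:ℝ) + 2*(Kφ₂:ℝ))/δx) * |s' - s|
            = (K₁:ℝ)*|s' - s| + ((Kφ₁:ℝ) * |s' - s|)/δx
              + ((K₂:ℝ) * |s' - s| + ((Kφ₁:ℝ) * |s' - s|)/δx + ((2*(Kφ₂:ℝ)) * |s' - s|)/δx) := by
          field_simp
          ring
        rw [e2]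
        have h4 : 0 ≤ (K₂:ℝ) * |s' - s| + ((Kφ₁:ℝ) * |s' - s|)/δx + ((2*(Kφ₂:ℝ)) * |s' - s|)/δx := by
          positivity
        linarith
      linarith
    have hcore2 : ∀ x : ℝ, x ∈ Icc (0:ℝ) 1 →
        |(G₂ x s' - (φ₂ s' - φ₂ x)/δx) - (G₂ x s - (φ₂ s - φ₂ x)/δx)| ≤ CF * |s' - s| := by
      intro x hx
      have hG := G2lip x s' x s hx hs' hx hs
      rw [sub_self, abs_zero, zero_add] at hG
      have hφ := φ2lip s' s hs' hs
      have e : (G₂ x s' - (φ₂ s' - φ₂ x)/δx) - (G₂ x s - (φ₂ s - φ₂ x)/δx)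
          = (G₂ x s' - G₂ x s) + (φ₂ s - φ₂ s')/δx := by ring
      rw [e]
      refine le_trans (abs_add_le _ _) ?_
      rw [abs_div, abs_of_pos hδx]
      have h2 : |φ₂ s - φ₂ s'|/δx ≤ ((Kφ₂:ℝ) * |s' - s|)/δx := by
        gcongr
        rw [abs_sub_comm]
        exact hφ
      have h3 : (K₂:ℝ)*|s' - s| + ((Kφ₂:ℝ) * |s' - s|)/δx ≤ CF * |s' - s| := by
        rw [hCFdef]
        have e2 : ((K₁:ℝ) + (K₂:ℝ) + (2*(Kφ₁:ℝ) + 2*(Kφ₂:ℝ))/δx) * |s' - s|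
            = (K₂:ℝ)*|s' - s| + ((Kφ₂:ℝ) * |s' - s|)/δx
              + ((K₁:ℝ) * |s' - s| + ((Kφ₂:ℝ) * |s' - s|)/δx + ((2*(Kφ₁:ℝ)) * |s' - s|)/δx) := by
          field_simp
          ring
        rw [e2]
        have h4 : 0 ≤ (K₁:ℝ) * |s' - s| + ((Kφ₂:ℝ) * |s' - s|)/δx + ((2*(Kφ₁:ℝ)) * |s' - s|)/δx := by
          positivity
        linarith
      linarith
    rcases eq_or_lt_of_le hj1 with he | h1
    · subst he
      rw [NFbl, NFbl, updE, updE]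
      have h := G1lip ub s' ub s hub hs' hub hs
      rw [sub_self, abs_zero, zero_add] at h
      refine le_trans h (mul_le_mul_of_nonneg_right KleCF.1 (abs_nonneg _))
    rcases eq_or_lt_of_le hj2 with he | h2
    · subst he
      rw [NFbr, NFbr, updN v (N:ℤ) s' ((N:ℤ)-1) (by omega), updN v (N:ℤ) s ((N:ℤ)-1) (by omega),
        sub_self, abs_zero]
      exact habs
    rcases lt_trichotomy j 0 with hj0 | hj0 | hj0
    · rw [NFint1 _ _ _ _ h1 hj0, NFint1 _ _ _ _ h1 hj0, updE, updE,
        updN v j s' (j-1) (by omega), updN v j s (j-1) (by omega)]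
      exact hcore1 (v (j-1)) (hv (j-1) (memg _ (by omega) (by omega)))
    · subst hj0
      rw [NF0eq, NF0eq, updE, updE, updN v 0 s' (-1) (by omega), updN v 0 s (-1) (by omega)]
      exact ΨlipB (v (-1)) s s' (hv (-1) (memg _ (by omega) (by omega))) hs hs'
    · rw [NFint2 _ _ _ _ hj0 h2, NFint2 _ _ _ _ hj0 h2, updE, updE,
        updN v j s' (j-1) (by omega), updN v j s (j-1) (by omega)]
      exact hcore2 (v (j-1)) (hv (j-1) (memg _ (by omega) (by omega)))
  -- constant vectors
  set z : ℤ → ℝ := fun _ => (0:ℝ) with hzdef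
  set o : ℤ → ℝ := fun _ => (1:ℝ) with hodef
  have hz : ∀ k, z k = 0 := fun _ => rfl
  have ho : ∀ k, o k = 1 := fun _ => rfl
  have hzr : ∀ k ∈ grid, z k ∈ Icc (0:ℝ) 1 := fun k _ => mem0
  have hor : ∀ k ∈ grid, o k ∈ Icc (0:ℝ) 1 := fun k _ => mem1
  have z0 : ∀ ub uB (j : ℤ), -(N:ℤ) < j → j < (N:ℤ) → NF ub uB z j = 0 := by
    intro ub uB j h1 h2
    rcases lt_trichotomy j 0 with hj0 | hj0 | hj0
    · rw [NFint1 _ _ _ _ h1 hj0]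
      show G₁ 0 0 - (φ₁ 0 - φ₁ 0)/δx = 0
      rw [hG₁diag 0 mem0, hf₁0]
      ring
    · subst hj0
      rw [NF0eq]
      show Ψ 0 0 = 0
      simp only [hΨ]
      rw [hcd00.1, hG₁diag 0 mem0, hf₁0]
      ring
    · rw [NFint2 _ _ _ _ hj0 h2]
      show G₂ 0 0 - (φ₂ 0 - φ₂ 0)/δx = 0
      rw [hG₂diag 0 mem0, hf₂0]
      ring
  have z1 : ∀ ub uB (j : ℤ), -(N:ℤ) < j → j < (N:ℤ) → NF ub uB o j = q := by
    intro ub uB j h1 h2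
    rcases lt_trichotomy j 0 with hj0 | hj0 | hj0
    · rw [NFint1 _ _ _ _ h1 hj0]
      show G₁ 1 1 - (φ₁ 1 - φ₁ 1)/δx = q
      rw [hG₁diag 1 mem1, hf₁1]
      ring
    · subst hj0
      rw [NF0eq]
      show Ψ 1 1 = q
      simp only [hΨ]
      rw [hcd11.1, hG₁diag 1 mem1, hf₁1]
      ring
    · rw [NFint2 _ _ _ _ hj0 h2]
      show G₂ 1 1 - (φ₂ 1 - φ₂ 1)/δx = q
      rw [hG₂diag 1 mem1, hf₂1]
      ring
  have NFzero : ∀ ub uB : ℝ, ub ∈ Icc (0:ℝ) 1 → uB ∈ Icc (0:ℝ) 1 → ∀ j : ℤ,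
      -(N:ℤ) ≤ j → j ≤ (N:ℤ)-1 → NF ub uB z (j+1) - NF ub uB z j ≤ 0 := by
    intro ub uB hub huB j h1 h2
    have hg0 : (0:ℝ) ≤ G₁ ub 0 := by
      have h : G₁ 0 0 ≤ G₁ ub 0 := hG₁mono 0 mem0 mem0 hub hub.1
      rw [hG₁diag 0 mem0, hf₁0] at h
      exact h
    have hg2 : G₂ 0 uB ≤ 0 := by
      have h : G₂ 0 uB ≤ G₂ 0 0 := hG₂anti 0 mem0 mem0 huB huB.1
      rw [hG₂diag 0 mem0, hf₂0] at h
      exact h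
    by_cases hL : j = -(N:ℤ)
    · by_cases hRq : j + 1 = (N:ℤ)
      · exfalso; omega
      · subst hL
        rw [NFbl, z0 ub uB (-(N:ℤ)+1) (by omega) (by omega), hz (-(N:ℤ))]
        linarith
    · by_cases hRq : j + 1 = (N:ℤ)
      · rw [hRq, NFbr, z0 ub uB j (by omega) (by omega), hz ((N:ℤ)-1)]
        linarith
      · rw [z0 ub uB (j+1) (by omega) (by omega), z0 ub uB j (by omega) (by omega)]
        norm_num
  have NFone : ∀ ub uB : ℝ, ub ∈ Icc (0:ℝ) 1 → uB ∈ Icc (0:ℝ) 1 → ∀ j : ℤ,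
      -(N:ℤ) ≤ j → j ≤ (N:ℤ)-1 → 0 ≤ NF ub uB o (j+1) - NF ub uB o j := by
    intro ub uB hub huB j h1 h2
    have hg0 : G₁ ub 1 ≤ q := by
      have h : G₁ ub 1 ≤ G₁ 1 1 := hG₁mono 1 mem1 hub mem1 hub.2
      rw [hG₁diag 1 mem1, hf₁1] at h
      exact h
    have hg2 : q ≤ G₂ 1 uB := by
      have h : G₂ 1 1 ≤ G₂ 1 uB := hG₂anti 1 mem1 huB mem1 huB.2
      rw [hG₂diag 1 mem1, hf₂1] at h
      exact h
    by_cases hL : j = -(N:ℤ)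
    · by_cases hRq : j + 1 = (N:ℤ)
      · exfalso; omega
      · subst hL
        rw [NFbl, z1 ub uB (-(N:ℤ)+1) (by omega) (by omega), ho (-(N:ℤ))]
        linarith
    · by_cases hRq : j + 1 = (N:ℤ)
      · rw [hRq, NFbr, z1 ub uB j (by omega) (by omega), ho ((N:ℤ)-1)]
        linarith
      · rw [z1 ub uB (j+1) (by omega) (by omega), z1 ub uB j (by omega) (by omega)]
        norm_num
  -- the scheme equation in integrated form
  have schm : ∀ (w0 wv : ℤ → ℝ) (ub uB : ℝ), (∀ j ∈ grid, H w0 ub uB wv j = 0) →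
      ∀ j ∈ grid, phiCoef ϕ₁ ϕ₂ j * wv j * δx + (NF ub uB wv (j+1) - NF ub uB wv j) * δt
        = phiCoef ϕ₁ ϕ₂ j * w0 j * δx := by
    intro w0 wv ub uB hsol j hj
    have e := hsol j hj
    rw [Hdef] at e
    have e3 := congrArg (fun x : ℝ => x * δt) e
    simp only [zero_mul] at e3
    have e4 : phiCoef ϕ₁ ϕ₂ j * (wv j - w0 j) * δx / δt * δt
        = phiCoef ϕ₁ ϕ₂ j * (wv j - w0 j) * δx := div_mul_cancel₀ _ (ne_of_gt hδt)
    have e5 : (phiCoef ϕ₁ ϕ₂ j * (wv j - w0 j) * δx / δt + NF ub uB wv (j+1) - NF ub uB wv j) * δt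
        = phiCoef ϕ₁ ϕ₂ j * (wv j - w0 j) * δx / δt * δt
          + (NF ub uB wv (j+1) - NF ub uB wv j) * δt := by ring
    rw [e5, e4] at e3
    linarith [e3]
  -- one-step L¹ contraction
  have contract : ∀ w0 w0' : ℤ → ℝ, (∀ j ∈ grid, w0 j ∈ Icc (0:ℝ) 1) →
      (∀ j ∈ grid, w0' j ∈ Icc (0:ℝ) 1) → ∀ ub uB : ℝ, ub ∈ Icc (0:ℝ) 1 → uB ∈ Icc (0:ℝ) 1 →
      ∀ wv wv' : ℤ → ℝ, (∀ j ∈ grid, wv j ∈ Icc (0:ℝ) 1) → (∀ j ∈ grid, wv' j ∈ Icc (0:ℝ) 1) →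
      (∀ j ∈ grid, H w0 ub uB wv j = 0) → (∀ j ∈ grid, H w0' ub uB wv' j = 0) →
      ∑ j ∈ grid, phiCoef ϕ₁ ϕ₂ j * max (wv' j - wv j) 0 * δx
        ≤ ∑ j ∈ grid, phiCoef ϕ₁ ϕ₂ j * max (w0' j - w0 j) 0 * δx := by
    intro w0 w0' hw0 hw0' ub uB hub huB wv wv' hwv hwv' hsol hsol'
    set m : ℤ → ℝ := fun k => max (wv k) (wv' k) with hm
    have hmk : ∀ k, m k = max (wv k) (wv' k) := fun _ => rfl
    have hmr : ∀ k ∈ grid, m k ∈ Icc (0:ℝ) 1 := fun k hk =>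
      ⟨le_trans (hwv k hk).1 (le_max_left _ _), max_le (hwv k hk).2 (hwv' k hk).2⟩
    have stepA : ∀ j ∈ grid,
        phiCoef ϕ₁ ϕ₂ j * m j * δx + (NF ub uB m (j+1) - NF ub uB m j) * δt
          ≤ phiCoef ϕ₁ ϕ₂ j * max (w0 j) (w0' j) * δx := by
      intro j hj
      have hjb : -(N:ℤ) ≤ j ∧ j ≤ (N:ℤ)-1 := Finset.mem_Icc.mp (by rwa [hgrid] at hj)
      rcases le_total (wv' j) (wv j) with hc | hc
      · have hmj : m j = wv j := max_eq_left hc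
        have A1 : NF ub uB m (j+1) ≤ NF ub uB wv (j+1) := by
          refine NFmono ub uB hub huB m wv hmr hwv (j+1) (by omega) (by omega) ?_ ?_
          · intro _; rw [show j+1-1 = j by ring]; exact hmj.le
          · intro _; exact le_max_left _ _
        have A2 : NF ub uB wv j ≤ NF ub uB m j := by
          refine NFmono ub uB hub huB wv m hwv hmr j (by omega) (by omega) ?_ ?_
          · intro _; exact le_max_left _ _
          · intro _; exact hmj.le
        have e := schm w0 wv ub uB hsol j hj
        have B1 : phiCoef ϕ₁ ϕ₂ j * w0 j * δx ≤ phiCoef ϕ₁ ϕ₂ j * max (w0 j) (w0' j) * δx :=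
          mul_le_mul_of_nonneg_right
            (mul_le_mul_of_nonneg_left (le_max_left _ _) (phipos j).le) hδx.le
        have A1t := mul_le_mul_of_nonneg_right A1 hδt.le
        have A2t := mul_le_mul_of_nonneg_right A2 hδt.le
        rw [hmj]
        linarith
      · have hmj : m j = wv' j := max_eq_right hc
        have A1 : NF ub uB m (j+1) ≤ NF ub uB wv' (j+1) := by
          refine NFmono ub uB hub huB m wv' hmr hwv' (j+1) (by omega) (by omega) ?_ ?_
          · intro _; rw [show j+1-1 = j by ring]; exact hmj.le
          · intro _; exact le_max_right _ _
        have A2 : NF ub uB wv' j ≤ NF ub uB m j := by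
          refine NFmono ub uB hub huB wv' m hwv' hmr j (by omega) (by omega) ?_ ?_
          · intro _; exact le_max_right _ _
          · intro _; exact hmj.le
        have e := schm w0' wv' ub uB hsol' j hj
        have B1 : phiCoef ϕ₁ ϕ₂ j * w0' j * δx ≤ phiCoef ϕ₁ ϕ₂ j * max (w0 j) (w0' j) * δx :=
          mul_le_mul_of_nonneg_right
            (mul_le_mul_of_nonneg_left (le_max_right _ _) (phipos j).le) hδx.le
        have A1t := mul_le_mul_of_nonneg_right A1 hδt.le
        have A2t := mul_le_mul_of_nonneg_right A2 hδt.le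
        rw [hmj]
        linarith
    have sumA := Finset.sum_le_sum stepA
    have teleM : ∑ j ∈ grid, (NF ub uB m (j+1) - NF ub uB m j)
        = NF ub uB m (N:ℤ) - NF ub uB m (-(N:ℤ)) := by
      rw [hgrid]
      have h := sum_tele (fun j => NF ub uB m j) (-(N:ℤ)) ((N:ℤ)-1) (by omega)
      rw [show (N:ℤ)-1+1 = (N:ℤ) by ring] at h
      exact h
    have teleW : ∑ j ∈ grid, (NF ub uB wv (j+1) - NF ub uB wv j)
        = NF ub uB wv (N:ℤ) - NF ub uB wv (-(N:ℤ)) := by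
      rw [hgrid]
      have h := sum_tele (fun j => NF ub uB wv j) (-(N:ℤ)) ((N:ℤ)-1) (by omega)
      rw [show (N:ℤ)-1+1 = (N:ℤ) by ring] at h
      exact h
    have sumW : ∑ j ∈ grid, (phiCoef ϕ₁ ϕ₂ j * wv j * δx
          + (NF ub uB wv (j+1) - NF ub uB wv j) * δt)
        = ∑ j ∈ grid, phiCoef ϕ₁ ϕ₂ j * w0 j * δx :=
      Finset.sum_congr rfl (fun j hj => schm w0 wv ub uB hsol j hj)
    have bN : NF ub uB wv (N:ℤ) ≤ NF ub uB m (N:ℤ) := by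
      refine NFmono ub uB hub huB wv m hwv hmr (N:ℤ) (by omega) le_rfl ?_ ?_
      · intro _; exact le_max_left _ _
      · intro hne; exact absurd rfl hne
    have bm : NF ub uB m (-(N:ℤ)) ≤ NF ub uB wv (-(N:ℤ)) := by
      refine NFmono ub uB hub huB m wv hmr hwv (-(N:ℤ)) le_rfl (by omega) ?_ ?_
      · intro hne; exact absurd rfl hne
      · intro _; exact le_max_left _ _
    have teleMt : ∑ j ∈ grid, (NF ub uB m (j+1) - NF ub uB m j) * δt
        = (NF ub uB m (N:ℤ) - NF ub uB m (-(N:ℤ))) * δt := by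
      rw [← Finset.sum_mul, teleM]
    have teleWt : ∑ j ∈ grid, (NF ub uB wv (j+1) - NF ub uB wv j) * δt
        = (NF ub uB wv (N:ℤ) - NF ub uB wv (-(N:ℤ))) * δt := by
      rw [← Finset.sum_mul, teleW]
    rw [Finset.sum_add_distrib, teleMt] at sumA
    rw [Finset.sum_add_distrib, teleWt] at sumW
    have gl : ∑ j ∈ grid, phiCoef ϕ₁ ϕ₂ j * max (wv' j - wv j) 0 * δx
        = ∑ j ∈ grid, phiCoef ϕ₁ ϕ₂ j * m j * δx
          - ∑ j ∈ grid, phiCoef ϕ₁ ϕ₂ j * wv j * δx := by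
      rw [← Finset.sum_sub_distrib]
      refine Finset.sum_congr rfl (fun j _ => ?_)
      have hmx : max (wv' j - wv j) 0 = m j - wv j := by
        rw [hmk]
        rcases le_total (wv' j) (wv j) with h | h
        · rw [max_eq_right (by linarith : wv' j - wv j ≤ 0), max_eq_left h]
          ring
        · rw [max_eq_left (by linarith : (0:ℝ) ≤ wv' j - wv j), max_eq_right h]
      rw [hmx]
      ring
    have gr : ∑ j ∈ grid, phiCoef ϕ₁ ϕ₂ j * max (w0' j - w0 j) 0 * δx
        = ∑ j ∈ grid, phiCoef ϕ₁ ϕ₂ j * max (w0 j) (w0' j) * δx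
          - ∑ j ∈ grid, phiCoef ϕ₁ ϕ₂ j * w0 j * δx := by
      rw [← Finset.sum_sub_distrib]
      refine Finset.sum_congr rfl (fun j _ => ?_)
      have hmx : max (w0' j - w0 j) 0 = max (w0 j) (w0' j) - w0 j := by
        rcases le_total (w0' j) (w0 j) with h | h
        · rw [max_eq_right (by linarith : w0' j - w0 j ≤ 0), max_eq_left h]
          ring
        · rw [max_eq_left (by linarith : (0:ℝ) ≤ w0' j - w0 j), max_eq_right h]
      rw [hmx]
      ring
    rw [gl, gr]
    have bNt := mul_le_mul_of_nonneg_right bN hδt.le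
    have bmt := mul_le_mul_of_nonneg_right bm hδt.le
    linarith [sumA, sumW, bNt, bmt]
  -- one-step existence via Knaster–Tarski
  have step : ∀ w0 : ℤ → ℝ, (∀ j ∈ grid, w0 j ∈ Icc (0:ℝ) 1) → ∀ ub uB : ℝ,
      ub ∈ Icc (0:ℝ) 1 → uB ∈ Icc (0:ℝ) 1 →
      ∃ w : ℤ → ℝ, (∀ j ∈ grid, w j ∈ Icc (0:ℝ) 1) ∧ ∀ j ∈ grid, H w0 ub uB w j = 0 := by
    intro w0 hw0 ub uB hub huB
    set Λ : ℝ := (ϕ₁ + ϕ₂) * δx / δt + 2*CF + 1 with hΛdef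
    have hΛ : 0 < Λ := by
      have h1 : 0 < (ϕ₁ + ϕ₂) * δx / δt := div_pos (mul_pos (by linarith) hδx) hδt
      rw [hΛdef]
      linarith
    -- off-diagonal antitonicity of H
    have Hoff : ∀ v v' : ℤ → ℝ, (∀ k ∈ grid, v k ∈ Icc (0:ℝ) 1) →
        (∀ k ∈ grid, v' k ∈ Icc (0:ℝ) 1) → ∀ j ∈ grid, v j = v' j →
        (∀ k ∈ grid, v k ≤ v' k) → H w0 ub uB v' j ≤ H w0 ub uB v j := by
      intro v v' hv hv' j hj hjj hle
      have hjb : -(N:ℤ) ≤ j ∧ j ≤ (N:ℤ)-1 := Finset.mem_Icc.mp (by rwa [hgrid] at hj)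
      have A1 : NF ub uB v' (j+1) ≤ NF ub uB v (j+1) := by
        refine NFmono ub uB hub huB v' v hv' hv (j+1) (by omega) (by omega) ?_ ?_
        · intro _
          rw [show j+1-1 = j by ring]
          exact hjj.ge
        · intro hne
          exact hle (j+1) (memg _ (by omega) (by omega))
      have A2 : NF ub uB v j ≤ NF ub uB v' j := by
        refine NFmono ub uB hub huB v v' hv hv' j (by omega) (by omega) ?_ ?_
        · intro hne
          exact hle (j-1) (memg _ (by omega) (by omega))
        · intro _
          exact hjj.ge
      rw [Hdef, Hdef, hjj]
      linarith
    -- diagonal one-sided Lipschitz bound of H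
    have Hdiag : ∀ v : ℤ → ℝ, (∀ k ∈ grid, v k ∈ Icc (0:ℝ) 1) → ∀ j ∈ grid, ∀ s s' : ℝ,
        s ∈ Icc (0:ℝ) 1 → s' ∈ Icc (0:ℝ) 1 → s ≤ s' →
        H w0 ub uB (Function.update v j s') j - H w0 ub uB (Function.update v j s) j
          ≤ Λ * (s' - s) := by
      intro v hv j hj s s' hs hs' hss
      have hjb : -(N:ℤ) ≤ j ∧ j ≤ (N:ℤ)-1 := Finset.mem_Icc.mp (by rwa [hgrid] at hj)
      have L1 := NFlipL ub uB hub huB v hv s s' hs hs' (j+1) (by omega) (by omega)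
      rw [show j+1-1 = j by ring] at L1
      have L2 := NFlipR ub uB hub huB v hv s s' hs hs' j (by omega) (by omega)
      have habs : |s' - s| = s' - s := abs_of_nonneg (by linarith)
      rw [habs] at L1 L2
      have l1 := (abs_le.mp L1).2
      have l2 := (abs_le.mp L2).1
      rw [Hdef, Hdef, updE, updE]
      have hphi : phiCoef ϕ₁ ϕ₂ j * (s' - w0 j) * δx / δt - phiCoef ϕ₁ ϕ₂ j * (s - w0 j) * δx / δt
          = phiCoef ϕ₁ ϕ₂ j * (s' - s) * (δx / δt) := by
        field_simp
        ring
      have hphib : phiCoef ϕ₁ ϕ₂ j * (s' - s) * (δx / δt) ≤ (ϕ₁ + ϕ₂) * (s' - s) * (δx / δt) := by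
        have h0 : 0 ≤ (s' - s) * (δx/δt) := mul_nonneg (by linarith) (le_of_lt (div_pos hδx hδt))
        have h5 := mul_le_mul_of_nonneg_right (phile j) h0
        calc phiCoef ϕ₁ ϕ₂ j * (s' - s) * (δx / δt)
            = phiCoef ϕ₁ ϕ₂ j * ((s' - s) * (δx / δt)) := by ring
          _ ≤ (ϕ₁ + ϕ₂) * ((s' - s) * (δx / δt)) := h5
          _ = (ϕ₁ + ϕ₂) * (s' - s) * (δx / δt) := by ring
      have hΛexp : Λ * (s' - s) = (ϕ₁ + ϕ₂) * (s' - s) * (δx/δt) + 2*CF*(s'-s) + (s'-s) := by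
        rw [hΛdef]
        field_simp
        try ring
      nlinarith [l1, l2, hphi, hphib, hΛexp, hss]
    -- sub/supersolution at the clamp values
    have Hat0 : ∀ v : ℤ → ℝ, (∀ k ∈ grid, v k ∈ Icc (0:ℝ) 1) → ∀ j ∈ grid, v j = 0 →
        H w0 ub uB v j ≤ 0 := by
      intro v hv j hj hvj
      have hjb : -(N:ℤ) ≤ j ∧ j ≤ (N:ℤ)-1 := Finset.mem_Icc.mp (by rwa [hgrid] at hj)
      have h1 : H w0 ub uB v j ≤ H w0 ub uB z j :=
        Hoff z v hzr hv j hj (by rw [hz j]; exact hvj.symm) (fun k hk => by rw [hz k]; exact (hv k hk).1)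
      have h2 : H w0 ub uB z j ≤ 0 := by
        rw [Hdef]
        have h3 := NFzero ub uB hub huB j hjb.1 hjb.2
        have h4 : phiCoef ϕ₁ ϕ₂ j * (z j - w0 j) * δx / δt ≤ 0 := by
          rw [hz j]
          have h5 : phiCoef ϕ₁ ϕ₂ j * (0 - w0 j) * δx ≤ 0 := by
            have h6 : 0 ≤ phiCoef ϕ₁ ϕ₂ j * w0 j * δx :=
              mul_nonneg (mul_nonneg (phipos j).le (hw0 j hj).1) hδx.le
            nlinarith
          have h6 := mul_le_mul_of_nonneg_right h5 (inv_nonneg.mpr hδt.le)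
          rw [zero_mul] at h6
          rw [div_eq_mul_inv]
          exact h6
        linarith
      linarith
    have Hat1 : ∀ v : ℤ → ℝ, (∀ k ∈ grid, v k ∈ Icc (0:ℝ) 1) → ∀ j ∈ grid, v j = 1 →
        0 ≤ H w0 ub uB v j := by
      intro v hv j hj hvj
      have hjb : -(N:ℤ) ≤ j ∧ j ≤ (N:ℤ)-1 := Finset.mem_Icc.mp (by rwa [hgrid] at hj)
      have h1 : H w0 ub uB o j ≤ H w0 ub uB v j :=
        Hoff v o hv hor j hj (by rw [ho j]; exact hvj) (fun k hk => by rw [ho k]; exact (hv k hk).2)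
      have h2 : 0 ≤ H w0 ub uB o j := by
        rw [Hdef]
        have h3 := NFone ub uB hub huB j hjb.1 hjb.2
        have h4 : 0 ≤ phiCoef ϕ₁ ϕ₂ j * (o j - w0 j) * δx / δt := by
          rw [ho j]
          have h5 : 0 ≤ phiCoef ϕ₁ ϕ₂ j * (1 - w0 j) * δx :=
            mul_nonneg (mul_nonneg (phipos j).le (by linarith [(hw0 j hj).2])) hδx.le
          exact div_nonneg h5 hδt.le
        linarith
      linarith
    -- the clamped iteration operator
    have memK : ∀ x : ℝ, max 0 (min 1 x) ∈ Icc (0:ℝ) 1 :=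
      fun x => ⟨le_max_left _ _, max_le zero_le_one (min_le_left _ _)⟩
    set KF : (ℤ → ↥(Icc (0:ℝ) 1)) → (ℤ → ↥(Icc (0:ℝ) 1)) := fun ww j =>
      if j ∈ grid then
        ⟨max 0 (min 1 ((ww j : ℝ) - Λ⁻¹ * H w0 ub uB (fun k => ((ww k : ℝ))) j)), memK _⟩
      else ⟨0, mem0⟩ with hKF
    have KFmono : Monotone KF := by
      intro ww ww' hle j
      simp only [hKF]
      by_cases hj : j ∈ grid
      · rw [if_pos hj, if_pos hj, Subtype.mk_le_mk]
        have hvv : ∀ k, ((ww k : ℝ)) ≤ ((ww' k : ℝ)) := fun k => Subtype.coe_le_coe.mpr (hle k)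
        have hvr : ∀ k ∈ grid, ((ww k : ℝ)) ∈ Icc (0:ℝ) 1 := fun k _ => (ww k).2
        have hv'r : ∀ k ∈ grid, ((ww' k : ℝ)) ∈ Icc (0:ℝ) 1 := fun k _ => (ww' k).2
        have key : ((ww j : ℝ)) - Λ⁻¹ * H w0 ub uB (fun k => ((ww k : ℝ))) j
            ≤ ((ww' j : ℝ)) - Λ⁻¹ * H w0 ub uB (fun k => ((ww' k : ℝ))) j := by
          have h1 : H w0 ub uB (fun k => ((ww' k : ℝ))) j
              ≤ H w0 ub uB (Function.update (fun k => ((ww k : ℝ))) j ((ww' j : ℝ))) j := by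
            refine Hoff (Function.update (fun k => ((ww k : ℝ))) j ((ww' j : ℝ)))
              (fun k => ((ww' k : ℝ))) ?_ hv'r j hj (updE _ _ _) ?_
            · intro k hk
              by_cases hkj : k = j
              · subst hkj; rw [updE]; exact (ww' k).2
              · rw [updN _ _ _ _ hkj]; exact hvr k hk
            · intro k hk
              by_cases hkj : k = j
              · subst hkj; rw [updE]
              · rw [updN _ _ _ _ hkj]; exact hvv k
          have h2 : H w0 ub uB (Function.update (fun k => ((ww k : ℝ))) j ((ww' j : ℝ))) j
              - H w0 ub uB (fun k => ((ww k : ℝ))) j ≤ Λ * (((ww' j : ℝ)) - ((ww j : ℝ))) := by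
            have h := Hdiag (fun k => ((ww k : ℝ))) hvr j hj ((ww j : ℝ)) ((ww' j : ℝ))
              (ww j).2 (ww' j).2 (hvv j)
            rwa [Function.update_eq_self] at h
          have h3 : Λ⁻¹ * (H w0 ub uB (fun k => ((ww' k : ℝ))) j
                - H w0 ub uB (fun k => ((ww k : ℝ))) j)
              ≤ Λ⁻¹ * (Λ * (((ww' j : ℝ)) - ((ww j : ℝ)))) :=
            mul_le_mul_of_nonneg_left (by linarith) (inv_nonneg.mpr hΛ.le)
          rw [inv_mul_cancel_left₀ (ne_of_gt hΛ)] at h3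
          linarith [hvv j]
        exact max_le_max le_rfl (min_le_min le_rfl key)
      · rw [if_neg hj, if_neg hj]
    obtain ⟨wfix, hfixeq⟩ : ∃ ww, KF ww = ww :=
      ⟨OrderHom.lfp ⟨KF, KFmono⟩, OrderHom.map_lfp ⟨KF, KFmono⟩⟩
    refine ⟨fun k => ((wfix k : ℝ)), fun k _ => (wfix k).2, ?_⟩
    intro j hj
    set w : ℤ → ℝ := fun k => ((wfix k : ℝ)) with hwdef
    have hwr : ∀ k ∈ grid, w k ∈ Icc (0:ℝ) 1 := fun k _ => (wfix k).2
    have hcf := congrFun hfixeq j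
    simp only [hKF] at hcf
    rw [if_pos hj] at hcf
    have fixeq : max 0 (min 1 (w j - Λ⁻¹ * H w0 ub uB w j)) = w j := by
      have h2 := congrArg Subtype.val hcf
      exact h2
    rcases le_or_gt (w j - Λ⁻¹ * H w0 ub uB w j) 0 with h0 | h0
    · have hx : w j = 0 := by
        rw [min_eq_right (le_trans h0 zero_le_one), max_eq_left h0] at fixeq
        exact fixeq.symm
      have hinv : 0 ≤ Λ⁻¹ * H w0 ub uB w j := by
        rw [hx] at h0
        linarith
      have e := mul_inv_cancel_left₀ (ne_of_gt hΛ) (H w0 ub uB w j)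
      have hge : 0 ≤ H w0 ub uB w j := by
        have h5 := mul_nonneg hΛ.le hinv
        linarith [e]
      exact le_antisymm (Hat0 w hwr j hj hx) hge
    rcases le_or_gt 1 (w j - Λ⁻¹ * H w0 ub uB w j) with h1 | h1
    · have hx : w j = 1 := by
        rw [min_eq_left h1, max_eq_right zero_le_one] at fixeq
        exact fixeq.symm
      have hinv : Λ⁻¹ * H w0 ub uB w j ≤ 0 := by
        rw [hx] at h1
        linarith
      have e := mul_inv_cancel_left₀ (ne_of_gt hΛ) (H w0 ub uB w j)
      have hle' : H w0 ub uB w j ≤ 0 := by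
        have h5 := mul_nonpos_of_nonneg_of_nonpos hΛ.le hinv
        linarith [e]
      exact le_antisymm hle' (Hat1 w hwr j hj hx)
    · rw [min_eq_right h1.le, max_eq_right h0.le] at fixeq
      have hzero : Λ⁻¹ * H w0 ub uB w j = 0 := by linarith
      have e := mul_inv_cancel_left₀ (ne_of_gt hΛ) (H w0 ub uB w j)
      rw [hzero, mul_zero] at e
      exact e.symm
  -- existence of the full discrete solution
  have existP : ∃ u : ℕ → ℤ → ℝ, (∀ n, ∀ j ∈ grid, u n j ∈ Icc (0:ℝ) 1) ∧
      (∀ j ∈ grid, u 0 j = u0 j) ∧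
      (∀ n < M, ∀ j ∈ grid, H (u n) (ubar (n+1)) (ubbar (n+1)) (u (n+1)) j = 0) := by
    suffices hsuff : ∀ m : ℕ, m ≤ M → ∃ u : ℕ → ℤ → ℝ,
        (∀ n, ∀ j ∈ grid, u n j ∈ Icc (0:ℝ) 1) ∧ (∀ j ∈ grid, u 0 j = u0 j) ∧
        (∀ n < m, ∀ j ∈ grid, H (u n) (ubar (n+1)) (ubbar (n+1)) (u (n+1)) j = 0) by
      obtain ⟨u, h1, h2, h3⟩ := hsuff M le_rfl
      exact ⟨u, h1, h2, h3⟩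
    intro m
    induction m with
    | zero =>
      intro _
      exact ⟨fun _ => u0, fun n j hj => hu0 j hj, fun j _ => rfl,
        fun n hn => absurd hn (Nat.not_lt_zero n)⟩
    | succ m ih =>
      intro hm1
      obtain ⟨u, hur, hu0', husol⟩ := ih (by omega)
      obtain ⟨w, hwr, hwsol⟩ := step (u m) (hur m) (ubar (m+1)) (ubbar (m+1))
        (hubar (m+1) (by omega) (by omega)) (hubbar (m+1) (by omega) (by omega))
      refine ⟨fun n => if n ≤ m then u n else w, ?_, ?_, ?_⟩
      · intro n j hj
        show (if n ≤ m then u n else w) j ∈ Icc (0:ℝ) 1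
        by_cases hnm : n ≤ m
        · rw [if_pos hnm]
          exact hur n j hj
        · rw [if_neg hnm]
          exact hwr j hj
      · intro j hj
        show (if 0 ≤ m then u 0 else w) j = u0 j
        rw [if_pos (Nat.zero_le m)]
        exact hu0' j hj
      · intro n hn j hj
        show H (if n ≤ m then u n else w) (ubar (n+1)) (ubbar (n+1))
          (if n + 1 ≤ m then u (n+1) else w) j = 0
        by_cases hnm : n < m
        · rw [if_pos (by omega : n ≤ m), if_pos (by omega : n + 1 ≤ m)]
          exact husol n hnm j hj
        · have hnm' : n = m := by omega
          subst hnm'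
          rw [if_pos (le_refl n), if_neg (by omega : ¬ n + 1 ≤ n)]
          exact hwsol j hj
  -- multi-step contraction
  have multic : ∀ u v : ℕ → ℤ → ℝ,
      IsDiscreteSolution G₁ G₂ φ₁ φ₂ c ϕ₁ ϕ₂ δx δt (N:ℤ) M ubar ubbar u →
      IsDiscreteSolution G₁ G₂ φ₁ φ₂ c ϕ₁ ϕ₂ δx δt (N:ℤ) M ubar ubbar v →
      ∀ n : ℕ, n ≤ M →
      ∑ j ∈ grid, phiCoef ϕ₁ ϕ₂ j * max (v n j - u n j) 0 * δx
        ≤ ∑ j ∈ grid, phiCoef ϕ₁ ϕ₂ j * max (v 0 j - u 0 j) 0 * δx := by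
    intro u v hu hv n
    induction n with
    | zero => intro _; exact le_rfl
    | succ n ih =>
      intro hn
      have hnM : n < M := by omega
      have hsu : ∀ j ∈ grid, H (u n) (ubar (n+1)) (ubbar (n+1)) (u (n+1)) j = 0 := by
        intro j hj
        rw [← HS]
        exact hu.2 n hnM j hj
      have hsv : ∀ j ∈ grid, H (v n) (ubar (n+1)) (ubbar (n+1)) (v (n+1)) j = 0 := by
        intro j hj
        rw [← HS]
        exact hv.2 n hnM j hj
      have step1 := contract (u n) (v n) (fun j hj => hu.1 n (by omega) j hj)
        (fun j hj => hv.1 n (by omega) j hj)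
        (ubar (n+1)) (ubbar (n+1)) (hubar (n+1) (by omega) (by omega))
        (hubbar (n+1) (by omega) (by omega))
        (u (n+1)) (v (n+1)) (fun j hj => hu.1 (n+1) (by omega) j hj)
        (fun j hj => hv.1 (n+1) (by omega) j hj) hsu hsv
      exact le_trans step1 (ih (by omega))
  refine ⟨?_, ?_, ?_⟩
  · -- existence
    obtain ⟨u, hur, hu0eq, husol⟩ := existP
    refine ⟨u, ⟨?_, ?_⟩, hu0eq⟩
    · intro n _ j hj
      exact hur n j hj
    · intro n hn j hj
      rw [HS]
      exact husol n hn j hj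
  · -- uniqueness
    intro u u' hu hinit hu' hinit' n hn j hj
    have A := multic u' u hu' hu n hn
    have B := multic u u' hu hu' n hn
    have z1 : ∑ k ∈ grid, phiCoef ϕ₁ ϕ₂ k * max (u 0 k - u' 0 k) 0 * δx = 0 := by
      apply Finset.sum_eq_zero
      intro k hk
      rw [hinit k hk, hinit' k hk, sub_self]
      simp
    have z2 : ∑ k ∈ grid, phiCoef ϕ₁ ϕ₂ k * max (u' 0 k - u 0 k) 0 * δx = 0 := by
      apply Finset.sum_eq_zero
      intro k hk
      rw [hinit k hk, hinit' k hk, sub_self]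
      simp
    rw [z1] at A
    rw [z2] at B
    have htermA : ∀ k ∈ grid, 0 ≤ phiCoef ϕ₁ ϕ₂ k * max (u n k - u' n k) 0 * δx :=
      fun k _ => mul_nonneg (mul_nonneg (phipos k).le (le_max_right _ _)) hδx.le
    have htermB : ∀ k ∈ grid, 0 ≤ phiCoef ϕ₁ ϕ₂ k * max (u' n k - u n k) 0 * δx :=
      fun k _ => mul_nonneg (mul_nonneg (phipos k).le (le_max_right _ _)) hδx.le
    have allzA := (Finset.sum_eq_zero_iff_of_nonneg htermA).mp
      (le_antisymm A (Finset.sum_nonneg htermA))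
    have allzB := (Finset.sum_eq_zero_iff_of_nonneg htermB).mp
      (le_antisymm B (Finset.sum_nonneg htermB))
    have h1 : u n j - u' n j ≤ 0 := by
      by_contra hpos
      push_neg at hpos
      have hlt : 0 < phiCoef ϕ₁ ϕ₂ j * max (u n j - u' n j) 0 * δx :=
        mul_pos (mul_pos (phipos j) (by rw [max_eq_left hpos.le]; exact hpos)) hδx
      exact absurd (allzA j hj) (ne_of_gt hlt)
    have h2 : u' n j - u n j ≤ 0 := by
      by_contra hpos
      push_neg at hpos
      have hlt : 0 < phiCoef ϕ₁ ϕ₂ j * max (u' n j - u n j) 0 * δx :=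
        mul_pos (mul_pos (phipos j) (by rw [max_eq_left hpos.le]; exact hpos)) hδx
      exact absurd (allzB j hj) (ne_of_gt hlt)
    linarith
  · -- contraction
    intro u v hu hinitu hv hinitv n hn
    constructor
    · have A := multic v u hv hu n hn
      have e0 : ∑ k ∈ grid, phiCoef ϕ₁ ϕ₂ k * max (u 0 k - v 0 k) 0 * δx
          = ∑ k ∈ grid, phiCoef ϕ₁ ϕ₂ k * max (u0 k - v0 k) 0 * δx :=
        Finset.sum_congr rfl (fun k hk => by rw [hinitu k hk, hinitv k hk])
      rw [e0] at A
      exact A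
    · have B := multic u v hu hv n hn
      have e0 : ∑ k ∈ grid, phiCoef ϕ₁ ϕ₂ k * max (v 0 k - u 0 k) 0 * δx
          = ∑ k ∈ grid, phiCoef ϕ₁ ϕ₂ k * max (-(u0 k - v0 k)) 0 * δx :=
        Finset.sum_congr rfl (fun k hk => by rw [hinitu k hk, hinitv k hk, neg_sub])
      rw [e0] at B
      have e1 : ∑ k ∈ grid, phiCoef ϕ₁ ϕ₂ k * max (-(u n k - v n k)) 0 * δx
          = ∑ k ∈ grid, phiCoef ϕ₁ ϕ₂ k * max (v n k - u n k) 0 * δx :=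
        Finset.sum_congr rfl (fun k hk => by rw [neg_sub])
      rw [e1]
      exact B
end
end
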